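/- arXiv:1901.09876 — 3 statements merged into one kernel-verified Lean document; each statement's English description precedes it below -/
import Mathlib

section
/- There exists a universal constant C such that the following holds. Let E ⊂ ℝ² be a finite set, f : E → [0, ∞), x, x′ ∈ ℝ², M ≥ 0, and let k₁, k₂ be nonnegative integers with k₁ ≥ 4k₂. Given P ∈ Γ₊^♯(x, k₁, M), there exists P′ ∈ Γ₊^♯(x′, k₂, M) such that |∂^α(P − P′)(x)| ≤ C·M·|x − x′|^{2−|α|} and |∂^α(P − P′)(x′)| ≤ C·M·|x − x′|^{2−|α|} for all multi-indices α with |α| ≤ 1. -/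
noncomputable section

/-- The plane `ℝ²` with the Euclidean metric. -/
abbrev V2 : Type := EuclideanSpace ℝ (Fin 2)

/-- Partial derivative of `F : ℝ² → ℝ` in the `i`-th coordinate direction. -/
noncomputable def pd (i : Fin 2) (F : V2 → ℝ) : V2 → ℝ :=
  fun x => fderiv ℝ F x (EuclideanSpace.single i 1)

/-- `Σ_{|α| ≤ 2} |∂^α F(x)|²`, the sum over all multi-indices `α` of order at most `2`. -/
noncomputable def c2SqAt (F : V2 → ℝ) (x : V2) : ℝ :=
  (F x) ^ 2 + (pd 0 F x) ^ 2 + (pd 1 F x) ^ 2 +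
    (pd 0 (pd 0 F) x) ^ 2 + (pd 0 (pd 1 F) x) ^ 2 + (pd 1 (pd 1 F) x) ^ 2

/-- `‖F‖_{C²(ℝ²)} := sup_x (Σ_{|α|≤2} |∂^α F(x)|²)^{1/2} ≤ M`. -/
def C2NormLE (F : V2 → ℝ) (M : ℝ) : Prop :=
  ∀ x : V2, Real.sqrt (c2SqAt F x) ≤ M

/-- The 1-jet of `F` at `x`: `𝒥_x F (y) = F(x) + ∇F(x) · (y − x)`. -/
noncomputable def jet (x : V2) (F : V2 → ℝ) : V2 → ℝ :=
  fun y => F x + fderiv ℝ F x (y - x)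

/-- `Γ₊(x, S, M)`: the 1-jets at `x` of nonnegative `C²` functions `F` with
`‖F‖_{C²(ℝ²)} ≤ M` and `F = f` on `S`. -/
def GammaPlus (f : V2 → ℝ) (x : V2) (S : Finset V2) (M : ℝ) : Set (V2 → ℝ) :=
  {P | ∃ F : V2 → ℝ, ContDiff ℝ 2 F ∧ (∀ y : V2, 0 ≤ F y) ∧ C2NormLE F M ∧
        (∀ y ∈ S, F y = f y) ∧ jet x F = P}

/-- `σ(x, S)`: the 1-jets at `x` of `C²` functions `F` with `‖F‖_{C²(ℝ²)} ≤ 1` and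
`F = 0` on `S`. -/
def sigmaSet (x : V2) (S : Finset V2) : Set (V2 → ℝ) :=
  {P | ∃ F : V2 → ℝ, ContDiff ℝ 2 F ∧ (∀ y ∈ S, F y = 0) ∧ C2NormLE F 1 ∧
        jet x F = P}

/-- `Γ₊^♯(x, k, M) := ⋂_{S ⊆ E, #S ≤ k} Γ₊(x, S, M)`. -/
def GammaPlusSharp (E : Finset V2) (f : V2 → ℝ) (x : V2) (k : ℕ) (M : ℝ) :
    Set (V2 → ℝ) :=
  {P | ∀ S : Finset V2, S ⊆ E → S.card ≤ k → P ∈ GammaPlus f x S M}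

/-- `σ^♯(x, k) := ⋂_{S ⊆ E, #S ≤ k} σ(x, S)`. -/
def sigmaSharp (E : Finset V2) (x : V2) (k : ℕ) : Set (V2 → ℝ) :=
  {P | ∀ S : Finset V2, S ⊆ E → S.card ≤ k → P ∈ sigmaSet x S}

namespace TransferAux

noncomputable def ee (i : Fin 2) : V2 := EuclideanSpace.single i 1

lemma basis_expand (v : V2) : v = v 0 • ee 0 + v 1 • ee 1 := by
  ext j
  fin_cases j <;> simp [ee, EuclideanSpace.single_apply]

lemma abs_coord_le (v : V2) (i : Fin 2) : |v i| ≤ ‖v‖ := by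
  rw [EuclideanSpace.norm_eq, ← Real.sqrt_sq_eq_abs]
  apply Real.sqrt_le_sqrt
  rw [Fin.sum_univ_two]
  fin_cases i <;> simp [sq_abs] <;> positivity

lemma clm_abs_le (L : V2 →L[ℝ] ℝ) (v : V2) :
    |L v| ≤ (|L (ee 0)| + |L (ee 1)|) * ‖v‖ := by
  have h : L v = v 0 * L (ee 0) + v 1 * L (ee 1) := by
    conv_lhs => rw [basis_expand v]
    simp
  rw [h]
  have h0 := abs_coord_le v 0
  have h1 := abs_coord_le v 1
  have t := abs_add_le (v 0 * L (ee 0)) (v 1 * L (ee 1))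
  rw [abs_mul, abs_mul] at t
  nlinarith [abs_nonneg (L (ee 0)), abs_nonneg (L (ee 1)), abs_nonneg (v 0), abs_nonneg (v 1)]

lemma hasFDerivAt_affine (c : ℝ) (x : V2) (L : V2 →L[ℝ] ℝ) (z : V2) :
    HasFDerivAt (fun y => c + L (y - x)) L z := by
  have h : (fun y : V2 => c + L (y - x)) = fun y => (c - L x) + L y := by
    funext y; rw [map_sub]; ring
  rw [h]
  simpa using (L.hasFDerivAt (x := z))

lemma hasFDerivAt_jet (F : V2 → ℝ) (x z : V2) :
    HasFDerivAt (jet x F) (fderiv ℝ F x) z := by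
  exact hasFDerivAt_affine (F x) x (fderiv ℝ F x) z

lemma fderiv_jet (F : V2 → ℝ) (x z : V2) : fderiv ℝ (jet x F) z = fderiv ℝ F x :=
  (hasFDerivAt_jet F x z).fderiv

lemma pd_jet (F : V2 → ℝ) (x z : V2) (i : Fin 2) :
    pd i (jet x F) z = fderiv ℝ F x (ee i) := by
  simp [pd, fderiv_jet, ee]

end TransferAux

namespace TransferAux

lemma c2SqAt_nonneg (F : V2 → ℝ) (y : V2) : 0 ≤ c2SqAt F y := by
  unfold c2SqAt; positivity

lemma M_nonneg {F : V2 → ℝ} {M : ℝ} (h : C2NormLE F M) : 0 ≤ M :=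
  le_trans (Real.sqrt_nonneg _) (h 0)

lemma comp_bound {F : V2 → ℝ} {M : ℝ} (h : C2NormLE F M) (y : V2) {t : ℝ}
    (ht : t ^ 2 ≤ c2SqAt F y) : |t| ≤ M := by
  have h0 := c2SqAt_nonneg F y
  have h1 := h y
  have h2 := Real.sq_sqrt h0
  have h3 := Real.sqrt_nonneg (c2SqAt F y)
  nlinarith [sq_abs t, abs_nonneg t]

lemma val_bound {F : V2 → ℝ} {M : ℝ} (h : C2NormLE F M) (y : V2) : |F y| ≤ M :=
  comp_bound h y (by unfold c2SqAt; nlinarith [sq_nonneg (pd 0 F y), sq_nonneg (pd 1 F y), sq_nonneg (pd 0 (pd 0 F) y), sq_nonneg (pd 0 (pd 1 F) y), sq_nonneg (pd 1 (pd 1 F) y)])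

lemma pd_bound {F : V2 → ℝ} {M : ℝ} (h : C2NormLE F M) (y : V2) (i : Fin 2) :
    |pd i F y| ≤ M := by
  have hi : i = 0 ∨ i = 1 := by fin_cases i <;> simp
  refine comp_bound h y ?_
  rcases hi with rfl | rfl <;> (unfold c2SqAt; nlinarith [sq_nonneg (F y), sq_nonneg (pd 0 F y), sq_nonneg (pd 1 F y), sq_nonneg (pd 0 (pd 0 F) y), sq_nonneg (pd 0 (pd 1 F) y), sq_nonneg (pd 1 (pd 1 F) y)])

lemma pd_contDiff {F : V2 → ℝ} (hF : ContDiff ℝ 2 F) (i : Fin 2) :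
    ContDiff ℝ 1 (pd i F) := by
  have h : ContDiff ℝ 1 (fderiv ℝ F) := hF.fderiv_right (by norm_num)
  exact h.clm_apply contDiff_const

lemma pd_comm {F : V2 → ℝ} (hF : ContDiff ℝ 2 F) (y : V2) :
    pd 1 (pd 0 F) y = pd 0 (pd 1 F) y := by
  have hdf : DifferentiableAt ℝ (fderiv ℝ F) y :=
    ((hF.fderiv_right (m := 1) le_rfl).differentiable one_ne_zero).differentiableAt
  have key : ∀ i j : Fin 2, pd i (pd j F) y = fderiv ℝ (fderiv ℝ F) y (ee i) (ee j) := by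
    intro i j
    have h1 : HasFDerivAt (fun z => fderiv ℝ F z (ee j))
        ((ContinuousLinearMap.apply ℝ ℝ (ee j)).comp (fderiv ℝ (fderiv ℝ F) y)) y :=
      ((ContinuousLinearMap.apply ℝ ℝ (ee j)).hasFDerivAt).comp y hdf.hasFDerivAt
    have : pd j F = fun z => fderiv ℝ F z (ee j) := rfl
    rw [show pd i (pd j F) y = fderiv ℝ (pd j F) y (ee i) from rfl, this, h1.fderiv]
    rfl
  rw [key, key]
  exact second_derivative_symmetric
    (fun z => ((hF.differentiable (by norm_num)) z).hasFDerivAt) hdf.hasFDerivAt _ _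

lemma pd_pd_bound {F : V2 → ℝ} {M : ℝ} (hF : ContDiff ℝ 2 F) (h : C2NormLE F M)
    (y : V2) (i j : Fin 2) : |pd i (pd j F) y| ≤ M := by
  have base : ∀ t : ℝ, t = pd 0 (pd 0 F) y ∨ t = pd 0 (pd 1 F) y ∨ t = pd 1 (pd 1 F) y →
      |t| ≤ M := by
    rintro t (rfl | rfl | rfl) <;>
    · refine comp_bound h y ?_
      unfold c2SqAt
      nlinarith [sq_nonneg (F y), sq_nonneg (pd 0 F y), sq_nonneg (pd 1 F y), sq_nonneg (pd 0 (pd 0 F) y), sq_nonneg (pd 0 (pd 1 F) y), sq_nonneg (pd 1 (pd 1 F) y)]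
  have hi : i = 0 ∨ i = 1 := by fin_cases i <;> simp
  have hj : j = 0 ∨ j = 1 := by fin_cases j <;> simp
  rcases hi with rfl | rfl <;> rcases hj with rfl | rfl
  · exact base _ (Or.inl rfl)
  · exact base _ (Or.inr (Or.inl rfl))
  · rw [pd_comm hF]; exact base _ (Or.inr (Or.inl rfl))
  · exact base _ (Or.inr (Or.inr rfl))

lemma pd_lip {F : V2 → ℝ} {M : ℝ} (hF : ContDiff ℝ 2 F) (h : C2NormLE F M)
    (i : Fin 2) (y z : V2) : |pd i F y - pd i F z| ≤ 2 * M * ‖y - z‖ := by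
  have hM := M_nonneg h
  have hdiff : ∀ w : V2, DifferentiableAt ℝ (pd i F) w :=
    fun w => ((pd_contDiff hF i).differentiable one_ne_zero).differentiableAt
  have hbound : ∀ w : V2, ‖fderiv ℝ (pd i F) w‖ ≤ 2 * M := by
    intro w
    refine ContinuousLinearMap.opNorm_le_bound _ (by linarith) fun v => ?_
    have h1 := clm_abs_le (fderiv ℝ (pd i F) w) v
    have e0 : fderiv ℝ (pd i F) w (ee 0) = pd 0 (pd i F) w := rfl
    have e1 : fderiv ℝ (pd i F) w (ee 1) = pd 1 (pd i F) w := rfl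
    rw [e0, e1] at h1
    have b0 := pd_pd_bound hF h w 0 i
    have b1 := pd_pd_bound hF h w 1 i
    calc ‖fderiv ℝ (pd i F) w v‖ = |fderiv ℝ (pd i F) w v| := rfl
      _ ≤ (|pd 0 (pd i F) w| + |pd 1 (pd i F) w|) * ‖v‖ := h1
      _ ≤ 2 * M * ‖v‖ := by nlinarith [norm_nonneg v]
  have := convex_univ.norm_image_sub_le_of_norm_fderiv_le (f := pd i F) (C := 2 * M)
    (fun w _ => hdiff w) (fun w _ => hbound w) (Set.mem_univ z) (Set.mem_univ y)
  simpa [Real.norm_eq_abs] using this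

lemma taylor_value {F : V2 → ℝ} {M : ℝ} (hF : ContDiff ℝ 2 F) (h : C2NormLE F M)
    (x x' : V2) : |F x' - jet x F x'| ≤ 4 * M * ‖x - x'‖ ^ 2 := by
  have hM := M_nonneg h
  set L := fderiv ℝ F x with hL
  set g : V2 → ℝ := fun y => F y - L (y - x) with hg
  have haff : ∀ w : V2, HasFDerivAt (fun y : V2 => (0 : ℝ) + L (y - x)) L w :=
    fun w => hasFDerivAt_affine 0 x L w
  have haff' : ∀ w : V2, HasFDerivAt (fun y : V2 => L (y - x)) L w := by
    intro w; simpa using haff w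
  have hgd : ∀ w : V2, HasFDerivAt g (fderiv ℝ F w - L) w :=
    fun w => ((hF.differentiable (by norm_num)) w).hasFDerivAt.sub (haff' w)
  set s := Metric.closedBall x ‖x' - x‖ with hs
  have hxs : x ∈ s := Metric.mem_closedBall_self (norm_nonneg _)
  have hx's : x' ∈ s := by
    simp [hs, Metric.mem_closedBall, dist_eq_norm]
  have hbound : ∀ w ∈ s, ‖fderiv ℝ g w‖ ≤ 4 * M * ‖x - x'‖ := by
    intro w hw
    rw [(hgd w).fderiv]
    have hwx : ‖w - x‖ ≤ ‖x - x'‖ := by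
      rw [Metric.mem_closedBall, dist_eq_norm] at hw
      rw [norm_sub_rev x x']; exact hw
    refine ContinuousLinearMap.opNorm_le_bound _ (by positivity) fun v => ?_
    have h1 := clm_abs_le (fderiv ℝ F w - L) v
    have e0 : (fderiv ℝ F w - L) (ee 0) = pd 0 F w - pd 0 F x := rfl
    have e1 : (fderiv ℝ F w - L) (ee 1) = pd 1 F w - pd 1 F x := rfl
    rw [e0, e1] at h1
    have b0 := pd_lip hF h 0 w x
    have b1 := pd_lip hF h 1 w x
    calc ‖(fderiv ℝ F w - L) v‖ = |(fderiv ℝ F w - L) v| := rfl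
      _ ≤ (|pd 0 F w - pd 0 F x| + |pd 1 F w - pd 1 F x|) * ‖v‖ := h1
      _ ≤ 4 * M * ‖x - x'‖ * ‖v‖ := by
          have key : |pd 0 F w - pd 0 F x| + |pd 1 F w - pd 1 F x| ≤ 4 * M * ‖x - x'‖ := by
            nlinarith [norm_nonneg (w - x)]
          exact mul_le_mul_of_nonneg_right key (norm_nonneg v)
  have hmv := (convex_closedBall x ‖x' - x‖).norm_image_sub_le_of_norm_fderiv_le
    (f := g) (C := 4 * M * ‖x - x'‖)
    (fun w _ => (hgd w).differentiableAt) hbound hxs hx's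
  have hge : g x' - g x = F x' - jet x F x' := by
    simp only [hg, jet]
    have : L (x - x) = 0 := by simp
    rw [this]; ring
  rw [hge] at hmv
  calc |F x' - jet x F x'| = ‖F x' - jet x F x'‖ := rfl
    _ ≤ 4 * M * ‖x - x'‖ * ‖x' - x‖ := hmv
    _ = 4 * M * ‖x - x'‖ ^ 2 := by rw [norm_sub_rev x' x]; ring

end TransferAux

namespace TransferAux

lemma pd_combo {F G : V2 → ℝ} (hF : Differentiable ℝ F) (hG : Differentiable ℝ G)
    (a b : ℝ) (i : Fin 2) (w : V2) :
    pd i (fun y => a * F y + b * G y) w = a * pd i F w + b * pd i G w := by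
  have h1 : fderiv ℝ (fun y => a * F y + b * G y) w
      = a • fderiv ℝ F w + b • fderiv ℝ G w := by
    rw [fderiv_fun_add ((hF w).const_mul a) ((hG w).const_mul b),
      fderiv_const_mul (hF w) a, fderiv_const_mul (hG w) b]
  simp [pd, h1]

lemma combo_contDiff {F G : V2 → ℝ} (hF : ContDiff ℝ 2 F) (hG : ContDiff ℝ 2 G) (a b : ℝ) :
    ContDiff ℝ 2 (fun y => a * F y + b * G y) :=
  (contDiff_const.mul hF).add (contDiff_const.mul hG)

lemma pd_pd_combo {F G : V2 → ℝ} (hF : ContDiff ℝ 2 F) (hG : ContDiff ℝ 2 G)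
    (a b : ℝ) (i j : Fin 2) (w : V2) :
    pd i (pd j (fun y => a * F y + b * G y)) w
      = a * pd i (pd j F) w + b * pd i (pd j G) w := by
  have hdF := hF.differentiable (by norm_num)
  have hdG := hG.differentiable (by norm_num)
  have h1 : pd j (fun y => a * F y + b * G y) = fun w => a * pd j F w + b * pd j G w := by
    funext w; exact pd_combo hdF hdG a b j w
  rw [h1]
  exact pd_combo ((pd_contDiff hF j).differentiable one_ne_zero)
    ((pd_contDiff hG j).differentiable one_ne_zero) a b i w

noncomputable def vecC2 (F : V2 → ℝ) (y : V2) : EuclideanSpace ℝ (Fin 6) :=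
  (WithLp.equiv 2 (Fin 6 → ℝ)).symm fun j =>
    if j = 0 then F y else if j = 1 then pd 0 F y else if j = 2 then pd 1 F y
    else if j = 3 then pd 0 (pd 0 F) y else if j = 4 then pd 0 (pd 1 F) y
    else pd 1 (pd 1 F) y

lemma norm_vecC2 (F : V2 → ℝ) (y : V2) : ‖vecC2 F y‖ = Real.sqrt (c2SqAt F y) := by
  rw [EuclideanSpace.norm_eq]
  congr 1
  simp (config := { decide := true }) [vecC2, Fin.sum_univ_six, c2SqAt, Real.norm_eq_abs, sq_abs]

lemma vecC2_combo {F G : V2 → ℝ} (hF : ContDiff ℝ 2 F) (hG : ContDiff ℝ 2 G)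
    (a b : ℝ) (y : V2) :
    vecC2 (fun z => a * F z + b * G z) y = a • vecC2 F y + b • vecC2 G y := by
  have hdF := hF.differentiable (by norm_num)
  have hdG := hG.differentiable (by norm_num)
  ext j
  fin_cases j <;>
    simp (config := { decide := true }) [vecC2, pd_combo hdF hdG, pd_pd_combo hF hG, smul_eq_mul]

lemma C2NormLE_combo {F G : V2 → ℝ} {M a b : ℝ} (hF : ContDiff ℝ 2 F) (hG : ContDiff ℝ 2 G)
    (hFM : C2NormLE F M) (hGM : C2NormLE G M) (ha : 0 ≤ a) (hb : 0 ≤ b) (hab : a + b = 1) :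
    C2NormLE (fun y => a * F y + b * G y) M := by
  intro y
  rw [← norm_vecC2, vecC2_combo hF hG]
  calc ‖a • vecC2 F y + b • vecC2 G y‖ ≤ ‖a • vecC2 F y‖ + ‖b • vecC2 G y‖ := norm_add_le _ _
    _ = a * ‖vecC2 F y‖ + b * ‖vecC2 G y‖ := by
        rw [norm_smul, norm_smul, Real.norm_eq_abs, Real.norm_eq_abs,
          abs_of_nonneg ha, abs_of_nonneg hb]
    _ ≤ a * M + b * M := by
        have h1 := (norm_vecC2 F y).trans_le (hFM y)
        have h2 := (norm_vecC2 G y).trans_le (hGM y)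
        gcongr
    _ = M := by rw [← add_mul, hab, one_mul]

lemma jet_eq_of_coords {G₁ G₂ : V2 → ℝ} (x' : V2)
    (h0 : G₁ x' = G₂ x') (h1 : ∀ i : Fin 2, pd i G₁ x' = pd i G₂ x') :
    jet x' G₁ = jet x' G₂ := by
  funext y
  unfold jet
  rw [h0]
  congr 1
  have key : ∀ v : V2, fderiv ℝ G₁ x' v = fderiv ℝ G₂ x' v := by
    intro v
    conv_lhs => rw [basis_expand v]
    conv_rhs => rw [basis_expand v]
    simp only [map_add, map_smul, smul_eq_mul]
    have e0 := h1 0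
    have e1 := h1 1
    simp only [pd] at e0 e1
    simp only [ee]
    rw [e0, e1]
  exact key _

lemma slab_aux {a b c r p q : ℝ} (ha : 0 ≤ a) (hb : 0 ≤ b) (hab : a + b = 1)
    (hp : |p - c| ≤ r) (hq : |q - c| ≤ r) : |a * p + b * q - c| ≤ r := by
  have h : a * p + b * q - c = a * (p - c) + b * (q - c) := by linear_combination c * hab
  rw [h]
  calc |a * (p - c) + b * (q - c)| ≤ |a * (p - c)| + |b * (q - c)| := abs_add_le _ _
    _ = a * |p - c| + b * |q - c| := by
        rw [abs_mul, abs_mul, abs_of_nonneg ha, abs_of_nonneg hb]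
    _ ≤ a * r + b * r := add_le_add (mul_le_mul_of_nonneg_left hp ha)
        (mul_le_mul_of_nonneg_left hq hb)
    _ = r := by rw [← add_mul, hab, one_mul]

end TransferAux

namespace TransferAux

/-- Jet-coordinate set at `x'` of admissible functions for `S`. -/
def Aset (f : V2 → ℝ) (M : ℝ) (x' : V2) (S : Finset V2) : Set (EuclideanSpace ℝ (Fin 3)) :=
  {p | ∃ F : V2 → ℝ, ContDiff ℝ 2 F ∧ (∀ y : V2, 0 ≤ F y) ∧ C2NormLE F M ∧
    (∀ y ∈ S, F y = f y) ∧ p 0 = F x' ∧ p 1 = pd 0 F x' ∧ p 2 = pd 1 F x'}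

/-- Taylor box around the jet coordinates of `P`. -/
def Bset (c g0 g1 r1 r2 : ℝ) : Set (EuclideanSpace ℝ (Fin 3)) :=
  {p | |p 0 - c| ≤ r1 ∧ |p 1 - g0| ≤ r2 ∧ |p 2 - g1| ≤ r2}

lemma coord_combo (p q : EuclideanSpace ℝ (Fin 3)) (a b : ℝ) (i : Fin 3) :
    (a • p + b • q) i = a * p i + b * q i := by
  simp [smul_eq_mul]

lemma convex_Bset (c g0 g1 r1 r2 : ℝ) : Convex ℝ (Bset c g0 g1 r1 r2) := by
  intro p hp q hq a b ha hb hab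
  obtain ⟨hp1, hp2, hp3⟩ := hp
  obtain ⟨hq1, hq2, hq3⟩ := hq
  refine ⟨?_, ?_, ?_⟩ <;> rw [coord_combo]
  · exact slab_aux ha hb hab hp1 hq1
  · exact slab_aux ha hb hab hp2 hq2
  · exact slab_aux ha hb hab hp3 hq3

lemma convex_Aset (f : V2 → ℝ) (M : ℝ) (x' : V2) (S : Finset V2) :
    Convex ℝ (Aset f M x' S) := by
  intro p hp q hq a b ha hb hab
  obtain ⟨F₁, hc1, hpos1, hM1, hS1, hv1, hd11, hd12⟩ := hp
  obtain ⟨F₂, hc2, hpos2, hM2, hS2, hv2, hd21, hd22⟩ := hq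
  have hdF1 := hc1.differentiable (by norm_num)
  have hdF2 := hc2.differentiable (by norm_num)
  refine ⟨fun y => a * F₁ y + b * F₂ y, combo_contDiff hc1 hc2 a b,
    fun y => add_nonneg (mul_nonneg ha (hpos1 y)) (mul_nonneg hb (hpos2 y)),
    C2NormLE_combo hc1 hc2 hM1 hM2 ha hb hab, ?_, ?_, ?_, ?_⟩
  · intro y hy
    show a * F₁ y + b * F₂ y = f y
    rw [hS1 y hy, hS2 y hy]
    linear_combination f y * hab
  · rw [coord_combo, hv1, hv2]
  · rw [coord_combo, hd11, hd21, pd_combo hdF1 hdF2]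
  · rw [coord_combo, hd12, hd22, pd_combo hdF1 hdF2]

end TransferAux

open TransferAux

/-- **Lemma 4.2.** Jets in `Γ₊^♯(x, k₁, M)` are approximated, in the Whitney sense, by
jets in `Γ₊^♯(x′, k₂, M)` whenever `k₁ ≥ 4k₂`. -/
theorem GammaPlusSharp_transfer :
    ∃ C : ℝ, 0 < C ∧
      ∀ (E : Finset V2) (f : V2 → ℝ), (∀ y ∈ E, 0 ≤ f y) →
      ∀ (x x' : V2) (k₁ k₂ : ℕ) (M : ℝ), 0 ≤ M → 4 * k₂ ≤ k₁ →
      ∀ P ∈ GammaPlusSharp E f x k₁ M,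
        ∃ P' ∈ GammaPlusSharp E f x' k₂ M,
          |P x - P' x| ≤ C * M * ‖x - x'‖ ^ 2 ∧
          |P x' - P' x'| ≤ C * M * ‖x - x'‖ ^ 2 ∧
          ∀ i : Fin 2,
            |pd i (P - P') x| ≤ C * M * ‖x - x'‖ ∧
            |pd i (P - P') x'| ≤ C * M * ‖x - x'‖ := by
  classical
  refine ⟨8, by norm_num, ?_⟩
  intro E f hf x x' k₁ k₂ M hM hk P hP
  have hD0 : (0:ℝ) ≤ ‖x - x'‖ := norm_nonneg _
  -- base witness for `P`
  obtain ⟨F₀, hF₀c, hF₀pos, hF₀M, hF₀S, hF₀jet⟩ := hP ∅ (Finset.empty_subset E) (by simp)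
  have hPeq : P = jet x F₀ := hF₀jet.symm
  have hPval : ∀ y, P y = F₀ x + fderiv ℝ F₀ x (y - x) := fun y => by rw [hPeq]; rfl
  -- the family of convex sets
  set A : Finset V2 → Set (EuclideanSpace ℝ (Fin 3)) := Aset f M x' with hA
  set B : Set (EuclideanSpace ℝ (Fin 3)) :=
    Bset (P x') (fderiv ℝ F₀ x (ee 0)) (fderiv ℝ F₀ x (ee 1))
      (4 * M * ‖x - x'‖ ^ 2) (2 * M * ‖x - x'‖) with hB
  set Fam : Option (Finset V2) → Set (EuclideanSpace ℝ (Fin 3)) :=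
    fun o => o.elim B A with hFam
  set s : Finset (Option (Finset V2)) :=
    insert none ((E.powerset.filter fun S => S.card ≤ k₂).image some) with hs
  -- membership criteria for `s`
  have hsome_mem : ∀ S : Finset V2, S ⊆ E → S.card ≤ k₂ → some S ∈ s := by
    intro S h1 h2
    refine Finset.mem_insert_of_mem ?_
    rw [Finset.mem_image]
    exact ⟨S, by rw [Finset.mem_filter, Finset.mem_powerset]; exact ⟨h1, h2⟩, rfl⟩
  have hsome_inv : ∀ S : Finset V2, some S ∈ s → S ⊆ E ∧ S.card ≤ k₂ := by
    intro S hS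
    rw [hs, Finset.mem_insert] at hS
    rcases hS with h | h
    · exact absurd h (by simp)
    · rw [Finset.mem_image] at h
      obtain ⟨S', hS', hSS⟩ := h
      cases Option.some.inj hSS
      rw [Finset.mem_filter, Finset.mem_powerset] at hS'
      exact hS'
  -- convexity
  have h_convex : ∀ o ∈ s, Convex ℝ (Fam o) := by
    rintro (_ | S) _
    · exact convex_Bset _ _ _ _ _
    · exact convex_Aset f M x' S
  -- intersection of at most 4 members
  have h_inter : ∀ I : Finset (Option (Finset V2)), I ⊆ s → I.card ≤ 4 →
      (⋂ o ∈ I, Fam o).Nonempty := by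
    intro I hIs hIcard
    set U : Finset V2 := I.biUnion (fun o => o.getD ∅) with hU
    have hUE : U ⊆ E := by
      intro y hy
      rw [hU, Finset.mem_biUnion] at hy
      obtain ⟨o, hoI, hyo⟩ := hy
      match o with
      | none => simp at hyo
      | some S => exact (hsome_inv S (hIs hoI)).1 hyo
    have hUcard : U.card ≤ k₁ := by
      have h1 : U.card ≤ ∑ o ∈ I, (o.getD ∅).card := Finset.card_biUnion_le
      have h2 : ∀ o ∈ I, (o.getD ∅).card ≤ k₂ := by
        rintro (_ | S) hoI
        · simp
        · exact (hsome_inv S (hIs hoI)).2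
      calc U.card ≤ ∑ o ∈ I, (o.getD ∅).card := h1
        _ ≤ ∑ _o ∈ I, k₂ := Finset.sum_le_sum h2
        _ = I.card * k₂ := by rw [Finset.sum_const, smul_eq_mul]
        _ ≤ 4 * k₂ := Nat.mul_le_mul_right _ hIcard
        _ ≤ k₁ := hk
    obtain ⟨F, hFc, hFpos, hFM, hFS, hFjet⟩ := hP U hUE hUcard
    set q : EuclideanSpace ℝ (Fin 3) := (WithLp.equiv 2 (Fin 3 → ℝ)).symm
      (fun j => if j = 0 then F x' else if j = 1 then pd 0 F x' else pd 1 F x') with hq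
    have hq0 : q 0 = F x' := by simp [hq]
    have hq1 : q 1 = pd 0 F x' := by
      simp (config := { decide := true }) [hq]
    have hq2 : q 2 = pd 1 F x' := by
      simp (config := { decide := true }) [hq]
    refine ⟨q, Set.mem_iInter₂.mpr ?_⟩
    rintro (_ | S) hoI
    · -- q ∈ B
      show q ∈ B
      have hPF : P = jet x F := hFjet.symm
      have hgr : ∀ i : Fin 2, fderiv ℝ F₀ x (ee i) = pd i F x := by
        intro i
        have h1 : pd i P x = fderiv ℝ F₀ x (ee i) := by rw [hPeq]; exact pd_jet F₀ x x i
        have h2 : pd i P x = fderiv ℝ F x (ee i) := by rw [hPF]; exact pd_jet F x x i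
        rw [← h1, h2]; rfl
      refine ⟨?_, ?_, ?_⟩
      · rw [hq0, hPF]
        exact taylor_value hFc hFM x x'
      · rw [hq1, hgr 0]
        have := pd_lip hFc hFM 0 x' x
        rwa [norm_sub_rev] at this
      · rw [hq2, hgr 1]
        have := pd_lip hFc hFM 1 x' x
        rwa [norm_sub_rev] at this
    · -- q ∈ A S
      show q ∈ Aset f M x' S
      have hSU : S ⊆ U := by
        intro y hy
        rw [hU, Finset.mem_biUnion]
        exact ⟨some S, hoI, hy⟩
      exact ⟨F, hFc, hFpos, hFM, fun y hy => hFS y (hSU hy), hq0, hq1, hq2⟩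
  -- Helly's theorem
  have hrank : Module.finrank ℝ (EuclideanSpace ℝ (Fin 3)) = 3 := by
    simp [finrank_euclideanSpace]
  obtain ⟨p, hp⟩ := Convex.helly_theorem' (𝕜 := ℝ) h_convex
    (fun I hIs hIcard => h_inter I hIs (by rw [hrank] at hIcard; exact hIcard))
  have hpmem : ∀ o ∈ s, p ∈ Fam o := fun o ho => Set.mem_iInter₂.mp hp o ho
  have hpB : p ∈ B := hpmem none (Finset.mem_insert_self _ _)
  have hpA : ∀ S : Finset V2, S ⊆ E → S.card ≤ k₂ → p ∈ Aset f M x' S :=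
    fun S h1 h2 => hpmem (some S) (hsome_mem S h1 h2)
  obtain ⟨F', hc', hpos', hM', _, hp0, hp1, hp2⟩ := hpA ∅ (Finset.empty_subset E) (by simp)
  refine ⟨jet x' F', ?_, ?_⟩
  · -- membership in GammaPlusSharp
    intro S hSE hSk
    obtain ⟨G, hGc, hGpos, hGM, hGS, hG0, hG1, hG2⟩ := hpA S hSE hSk
    refine ⟨G, hGc, hGpos, hGM, hGS, ?_⟩
    refine jet_eq_of_coords x' (by rw [← hG0, hp0]) ?_
    intro i
    have hi : i = 0 ∨ i = 1 := by fin_cases i <;> simp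
    rcases hi with rfl | rfl
    · rw [← hG1, hp1]
    · rw [← hG2, hp2]
  · -- the estimates
    set P' : V2 → ℝ := jet x' F' with hP'def
    have hP'val : ∀ y, P' y = F' x' + fderiv ℝ F' x' (y - x') := fun y => rfl
    have hP'x' : P' x' = F' x' := by rw [hP'val]; simp
    have hBv : |P x' - P' x'| ≤ 4 * M * ‖x - x'‖ ^ 2 := by
      rw [hP'x', ← hp0, abs_sub_comm]
      exact hpB.1
    have hgrad : ∀ i : Fin 2,
        |fderiv ℝ F₀ x (ee i) - fderiv ℝ F' x' (ee i)| ≤ 2 * M * ‖x - x'‖ := by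
      intro i
      have h0 : p 1 = fderiv ℝ F' x' (ee 0) := hp1
      have h1 : p 2 = fderiv ℝ F' x' (ee 1) := hp2
      have hi : i = 0 ∨ i = 1 := by fin_cases i <;> simp
      rcases hi with rfl | rfl
      · rw [abs_sub_comm, ← h0]; exact hpB.2.1
      · rw [abs_sub_comm, ← h1]; exact hpB.2.2
    have hsub : ∀ z : V2, HasFDerivAt (P - P') (fderiv ℝ F₀ x - fderiv ℝ F' x') z := by
      intro z
      have h1 : HasFDerivAt P (fderiv ℝ F₀ x) z := by
        rw [hPeq]; exact hasFDerivAt_jet F₀ x z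
      have h2 : HasFDerivAt P' (fderiv ℝ F' x') z := hasFDerivAt_jet F' x' z
      exact h1.sub h2
    have hpdsub : ∀ (z : V2) (i : Fin 2),
        pd i (P - P') z = fderiv ℝ F₀ x (ee i) - fderiv ℝ F' x' (ee i) := by
      intro z i
      show fderiv ℝ (P - P') z (EuclideanSpace.single i 1) = _
      rw [(hsub z).fderiv]
      rfl
    refine ⟨?_, ?_, ?_⟩
    · -- |P x - P' x|
      have hxval : P x - P' x = (P x' - P' x')
          + (fderiv ℝ F₀ x (x - x') - fderiv ℝ F' x' (x - x')) := by
        rw [hPval x, hPval x', hP'val x, hP'val x']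
        simp only [map_sub]
        ring
      have hLL := clm_abs_le (fderiv ℝ F₀ x - fderiv ℝ F' x') (x - x')
      have he0 : (fderiv ℝ F₀ x - fderiv ℝ F' x') (ee 0)
          = fderiv ℝ F₀ x (ee 0) - fderiv ℝ F' x' (ee 0) := rfl
      have he1 : (fderiv ℝ F₀ x - fderiv ℝ F' x') (ee 1)
          = fderiv ℝ F₀ x (ee 1) - fderiv ℝ F' x' (ee 1) := rfl
      have hee : (fderiv ℝ F₀ x - fderiv ℝ F' x') (x - x')
          = fderiv ℝ F₀ x (x - x') - fderiv ℝ F' x' (x - x') := rfl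
      rw [he0, he1, hee] at hLL
      have hg0 := hgrad 0
      have hg1 := hgrad 1
      rw [hxval]
      calc |P x' - P' x' + (fderiv ℝ F₀ x (x - x') - fderiv ℝ F' x' (x - x'))|
          ≤ |P x' - P' x'| + |fderiv ℝ F₀ x (x - x') - fderiv ℝ F' x' (x - x')| := abs_add_le _ _
        _ ≤ 8 * M * ‖x - x'‖ ^ 2 := by
            nlinarith [abs_nonneg (fderiv ℝ F₀ x (ee 0) - fderiv ℝ F' x' (ee 0)),
              abs_nonneg (fderiv ℝ F₀ x (ee 1) - fderiv ℝ F' x' (ee 1))]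
    · -- |P x' - P' x'|
      nlinarith [hBv]
    · -- gradient estimates
      intro i
      constructor <;>
      · rw [hpdsub]
        nlinarith [hgrad i]
end
end

section
/- Let E ⊂ ℝ² be a finite set, f : E → [0, ∞), and M > 0. Suppose that for each subset S ⊂ E with #S ≤ 64 there exists F^S ∈ C²₊(ℝ²) with ‖F^S‖_{C²(ℝ²)} ≤ M and F^S = f on S. Then Γ₊^♯(x, 16, M) ≠ ∅ for every x ∈ ℝ². -/
noncomputable section

-- auxiliary
def comb (a b : ℝ) (F G : V2 → ℝ) : V2 → ℝ := fun z => a * F z + b * G z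

lemma pd_contDiff {F : V2 → ℝ} (hF : ContDiff ℝ 2 F) (j : Fin 2) : ContDiff ℝ 1 (pd j F) :=
  (hF.fderiv_right (by norm_num)).clm_apply contDiff_const

lemma pd_comb (a b : ℝ) {F G : V2 → ℝ} {y : V2} (hF : DifferentiableAt ℝ F y)
    (hG : DifferentiableAt ℝ G y) (i : Fin 2) :
    pd i (comb a b F G) y = a * pd i F y + b * pd i G y := by
  have h : HasFDerivAt (comb a b F G) (a • fderiv ℝ F y + b • fderiv ℝ G y) y :=
    (hF.hasFDerivAt.const_smul a).add (hG.hasFDerivAt.const_smul b)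
  simp [pd, h.fderiv]

lemma fderiv_apply_eq (F : V2 → ℝ) (x v : V2) :
    fderiv ℝ F x v = pd 0 F x * v 0 + pd 1 F x * v 1 := by
  have hv : v = v 0 • EuclideanSpace.single (0 : Fin 2) (1:ℝ) + v 1 • EuclideanSpace.single 1 1 := by
    ext j; fin_cases j <;> simp [EuclideanSpace.single_apply]
  conv_lhs => rw [hv]
  simp [pd]
  ring

noncomputable def vec6 (F : V2 → ℝ) (y : V2) : EuclideanSpace ℝ (Fin 6) :=
  (WithLp.equiv 2 (Fin 6 → ℝ)).symm
    ![F y, pd 0 F y, pd 1 F y, pd 0 (pd 0 F) y, pd 0 (pd 1 F) y, pd 1 (pd 1 F) y]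

lemma sqrt_c2SqAt_eq (F : V2 → ℝ) (y : V2) : Real.sqrt (c2SqAt F y) = ‖vec6 F y‖ := by
  rw [EuclideanSpace.norm_eq]
  congr 1
  simp [vec6, Fin.sum_univ_six, c2SqAt, sq_abs, Matrix.cons_val_succ]

lemma vec6_comb {F G : V2 → ℝ} (hF : ContDiff ℝ 2 F) (hG : ContDiff ℝ 2 G) (a b : ℝ) (y : V2) :
    vec6 (comb a b F G) y = a • vec6 F y + b • vec6 G y := by
  have hFd : Differentiable ℝ F := hF.differentiable (by norm_num)
  have hGd : Differentiable ℝ G := hG.differentiable (by norm_num)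
  have h1 : ∀ j : Fin 2, pd j (comb a b F G) = comb a b (pd j F) (pd j G) :=
    fun j => funext fun z => pd_comb a b (hFd z) (hGd z) j
  have hFd' : ∀ j : Fin 2, Differentiable ℝ (pd j F) :=
    fun j => (pd_contDiff hF j).differentiable one_ne_zero
  have hGd' : ∀ j : Fin 2, Differentiable ℝ (pd j G) :=
    fun j => (pd_contDiff hG j).differentiable one_ne_zero
  ext j
  fin_cases j <;>
    simp [vec6, comb, Matrix.cons_val_succ, h1, pd_comb a b (hFd y) (hGd y),
      pd_comb a b (hFd' 0 y) (hGd' 0 y), pd_comb a b (hFd' 1 y) (hGd' 1 y)] <;> rfl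

lemma comb_admissible {F G : V2 → ℝ} {M : ℝ} {a b : ℝ} (ha : 0 ≤ a) (hb : 0 ≤ b)
    (hab : a + b = 1) (hF : ContDiff ℝ 2 F) (hG : ContDiff ℝ 2 G)
    (hFn : C2NormLE F M) (hGn : C2NormLE G M) :
    ContDiff ℝ 2 (comb a b F G) ∧ C2NormLE (comb a b F G) M := by
  constructor
  · exact (contDiff_const.mul hF).add (contDiff_const.mul hG)
  · intro y
    rw [sqrt_c2SqAt_eq, vec6_comb hF hG a b y]
    calc ‖a • vec6 F y + b • vec6 G y‖ ≤ ‖a • vec6 F y‖ + ‖b • vec6 G y‖ := norm_add_le _ _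
      _ = a * ‖vec6 F y‖ + b * ‖vec6 G y‖ := by
          rw [norm_smul, norm_smul, Real.norm_eq_abs, Real.norm_eq_abs,
            abs_of_nonneg ha, abs_of_nonneg hb]
      _ ≤ a * M + b * M := by
          gcongr
          · rw [← sqrt_c2SqAt_eq]; exact hFn y
          · rw [← sqrt_c2SqAt_eq]; exact hGn y
      _ = M := by rw [← add_mul, hab, one_mul]

/-- **Lemma 4.3.** Under the hypothesis of the 2-D Finiteness Principle (every
at-most-`64`-point subset of `E` admits a nonnegative `C²` interpolant of norm `≤ M`),
the set `Γ₊^♯(x, 16, M)` is nonempty for every `x ∈ ℝ²`. -/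
theorem GammaPlusSharp_nonempty
    (E : Finset V2) (f : V2 → ℝ) (hf : ∀ y ∈ E, 0 ≤ f y) (M : ℝ) (hM : 0 < M)
    (h : ∀ S : Finset V2, S ⊆ E → S.card ≤ 64 →
      ∃ FS : V2 → ℝ, ContDiff ℝ 2 FS ∧ (∀ y : V2, 0 ≤ FS y) ∧
        C2NormLE FS M ∧ (∀ x ∈ S, FS x = f x)) :
    ∀ x : V2, (GammaPlusSharp E f x 16 M).Nonempty := by
  intro x
  classical
  set 𝒮 : Finset (Finset V2) := E.powerset.filter (fun S => S.card ≤ 16) with h𝒮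
  set A : Finset V2 → Set (EuclideanSpace ℝ (Fin 3)) := fun S =>
    {p | ∃ F : V2 → ℝ, ContDiff ℝ 2 F ∧ (∀ y : V2, 0 ≤ F y) ∧ C2NormLE F M ∧
      (∀ y ∈ S, F y = f y) ∧ p 0 = F x ∧ p 1 = pd 0 F x ∧ p 2 = pd 1 F x} with hA
  have hrank : Module.finrank ℝ (EuclideanSpace ℝ (Fin 3)) = 3 := finrank_euclideanSpace_fin
  have hconv : ∀ S ∈ 𝒮, Convex ℝ (A S) := by
    intro S _
    rintro p ⟨F, hF, hF0, hFn, hFf, hp0, hp1, hp2⟩ q ⟨G, hG, hG0, hGn, hGf, hq0, hq1, hq2⟩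
      a b ha hb hab
    obtain ⟨hc, hn⟩ := comb_admissible ha hb hab hF hG hFn hGn
    refine ⟨comb a b F G, hc, fun y => add_nonneg (mul_nonneg ha (hF0 y)) (mul_nonneg hb (hG0 y)),
      hn, fun y hy => by simp only [comb, hFf y hy, hGf y hy, ← add_mul, hab, one_mul], ?_, ?_, ?_⟩
    · simp [hp0, hq0, comb]
    · simp [hp1, hq1, pd_comb a b (hF.differentiable (by norm_num) x)
        (hG.differentiable (by norm_num) x)]
    · simp [hp2, hq2, pd_comb a b (hF.differentiable (by norm_num) x)
        (hG.differentiable (by norm_num) x)]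
  have hint : ∀ I ⊆ 𝒮, I.card ≤ Module.finrank ℝ (EuclideanSpace ℝ (Fin 3)) + 1 →
      (⋂ S ∈ I, A S).Nonempty := by
    intro I hI hIcard
    rw [hrank] at hIcard
    set U : Finset V2 := I.biUnion id with hU
    have hUE : U ⊆ E := by
      intro y hy
      obtain ⟨S, hSI, hyS⟩ := Finset.mem_biUnion.mp hy
      exact (Finset.mem_powerset.mp (Finset.mem_filter.mp (hI hSI)).1) hyS
    have hUcard : U.card ≤ 64 := by
      calc U.card ≤ ∑ S ∈ I, (id S).card := Finset.card_biUnion_le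
        _ ≤ ∑ _S ∈ I, 16 := Finset.sum_le_sum fun S hS =>
            (Finset.mem_filter.mp (hI hS)).2
        _ = I.card * 16 := by rw [Finset.sum_const, smul_eq_mul]
        _ ≤ 4 * 16 := by omega
        _ = 64 := by norm_num
    obtain ⟨F, hF, hF0, hFn, hFf⟩ := h U hUE hUcard
    refine ⟨(WithLp.equiv 2 (Fin 3 → ℝ)).symm ![F x, pd 0 F x, pd 1 F x], ?_⟩
    rw [Set.mem_iInter₂]
    intro S hS
    exact ⟨F, hF, hF0, hFn,
      fun y hy => hFf y (Finset.mem_biUnion.mpr ⟨S, hS, hy⟩), rfl, rfl, rfl⟩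
  obtain ⟨p, hp⟩ := Convex.helly_theorem' hconv hint
  rw [Set.mem_iInter₂] at hp
  refine ⟨fun y => p 0 + (p 1 * (y - x) 0 + p 2 * (y - x) 1), ?_⟩
  intro S hS hScard
  have hS𝒮 : S ∈ 𝒮 := Finset.mem_filter.mpr ⟨Finset.mem_powerset.mpr hS, hScard⟩
  obtain ⟨F, hF, hF0, hFn, hFf, e0, e1, e2⟩ := hp S hS𝒮
  refine ⟨F, hF, hF0, hFn, hFf, ?_⟩
  funext y
  rw [jet, fderiv_apply_eq F x (y - x), e0, e1, e2]
end
end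

section
/- Let E ⊂ ℝ² be finite, let k ≥ 1 be an integer, and let C_nice ≥ 1 and c_rep > 0 be given. Let Q be a dyadic square with side length δ_Q ≤ 1, and let x^♯ ∈ Q satisfy dist(x^♯, E) ≥ c_rep·δ_Q. Suppose that either δ_Q = 1, or there exists ŷ ∈ E ∩ (Q⁺)* with diam(σ^♯(ŷ, k)) < 2·C_nice·δ_Q. Then σ^♯(x^♯, 4k) ⊂ C·ℬ(x^♯, δ_Q) for a constant C depending only on C_nice and c_rep, where C·ℬ(x^♯, δ_Q) = {P ∈ 𝒫 : |∂^α P(x^♯)| ≤ C·δ_Q^{2−|α|} for |α| ≤ 1}. -/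
noncomputable section

/-- A (half-open) axis-parallel square `[s, s+len) × [t, t+len)` in `ℝ²`. -/
structure Sq where
  s : ℝ
  t : ℝ
  len : ℝ

/-- The square `Q` itself, as a subset of `ℝ²`. -/
def Sq.carrier (Q : Sq) : Set V2 :=
  {p : V2 | Q.s ≤ p 0 ∧ p 0 < Q.s + Q.len ∧ Q.t ≤ p 1 ∧ p 1 < Q.t + Q.len}

/-- `Q* := 2Q`, the concentric double of `Q`. -/
def Sq.double (Q : Sq) : Set V2 :=
  {p : V2 | Q.s - Q.len / 2 ≤ p 0 ∧ p 0 < Q.s + 3 * Q.len / 2 ∧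
            Q.t - Q.len / 2 ≤ p 1 ∧ p 1 < Q.t + 3 * Q.len / 2}

/-- The dyadic parent `Q⁺` of `Q`: the square of side `2·len` from the coarser dyadic
grid that contains `Q`. -/
noncomputable def Sq.parent (Q : Sq) : Sq :=
  ⟨2 * Q.len * (⌊Q.s / (2 * Q.len)⌋ : ℝ), 2 * Q.len * (⌊Q.t / (2 * Q.len)⌋ : ℝ),
    2 * Q.len⟩

/-- `Q` is a dyadic square (obtained by repeated bisection of unit lattice squares):
its side length is `2^{-m}` and its corner coordinates are integer multiples of it. -/
def Sq.IsDyadic (Q : Sq) : Prop :=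
  (∃ m : ℕ, Q.len = (2 : ℝ) ^ (-(m : ℤ))) ∧
    ∃ a b : ℤ, Q.s = (a : ℝ) * Q.len ∧ Q.t = (b : ℝ) * Q.len

/-- `diam(σ^♯(x, k))`: the Euclidean diameter of `σ^♯(x, k)` under the identification
`P ↦ (∂₁P(x), ∂₂P(x), P(x))` of affine polynomials with `ℝ³`. -/
noncomputable def sigmaSharpDiam (E : Finset V2) (x : V2) (k : ℕ) : ℝ :=
  ⨆ P ∈ sigmaSharp E x k, ⨆ P' ∈ sigmaSharp E x k,
    Real.sqrt ((pd 0 P x - pd 0 P' x) ^ 2 + (pd 1 P x - pd 1 P' x) ^ 2 +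
      (P x - P' x) ^ 2)

lemma v2_decomp (v : V2) :
    v = v 0 • EuclideanSpace.single (0 : Fin 2) (1:ℝ) + v 1 • EuclideanSpace.single 1 (1:ℝ) := by
  ext i
  fin_cases i <;> simp [EuclideanSpace.single_apply]

lemma clm_decomp (L : V2 →L[ℝ] ℝ) (v : V2) :
    L v = v 0 * L (EuclideanSpace.single 0 1) + v 1 * L (EuclideanSpace.single 1 1) := by
  conv_lhs => rw [v2_decomp v]
  simp [map_add, map_smul, smul_eq_mul]

lemma coord_le_norm (v : V2) (i : Fin 2) : |v i| ≤ ‖v‖ := by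
  rw [EuclideanSpace.norm_eq]
  rw [Fin.sum_univ_two]
  have : |v i| = Real.sqrt ((v i)^2) := by rw [Real.sqrt_sq_eq_abs]
  rw [this]
  apply Real.sqrt_le_sqrt
  fin_cases i <;> simp [Real.norm_eq_abs, sq_abs] <;> nlinarith [sq_nonneg (v 0), sq_nonneg (v 1)]

lemma opNorm_le_coords (L : V2 →L[ℝ] ℝ) :
    ‖L‖ ≤ |L (EuclideanSpace.single 0 1)| + |L (EuclideanSpace.single 1 1)| := by
  apply ContinuousLinearMap.opNorm_le_bound
  · positivity
  · intro v
    rw [clm_decomp L v]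
    rw [Real.norm_eq_abs]
    calc |v 0 * L (EuclideanSpace.single 0 1) + v 1 * L (EuclideanSpace.single 1 1)|
        ≤ |v 0| * |L (EuclideanSpace.single 0 1)| + |v 1| * |L (EuclideanSpace.single 1 1)| := by
          rw [← abs_mul, ← abs_mul]; exact abs_add_le _ _
      _ ≤ ‖v‖ * |L (EuclideanSpace.single 0 1)| + ‖v‖ * |L (EuclideanSpace.single 1 1)| := by
          gcongr <;> first | exact coord_le_norm v 0 | exact coord_le_norm v 1 | positivity
      _ = (|L (EuclideanSpace.single 0 1)| + |L (EuclideanSpace.single 1 1)|) * ‖v‖ := by ring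

lemma fderiv_affine (c : ℝ) (x : V2) (L : V2 →L[ℝ] ℝ) (z : V2) :
    fderiv ℝ (fun y => c + L (y - x)) z = L := by
  have h : (fun y : V2 => c + L (y - x)) = fun y => (c - L x) + L y := by
    funext y; rw [map_sub]; ring
  rw [h]
  have : HasFDerivAt (fun y : V2 => (c - L x) + L y) L z := by
    simpa using (L.hasFDerivAt (x := z)).const_add (c - L x)
  exact this.fderiv

lemma c2SqAt_nonneg (F : V2 → ℝ) (x : V2) : 0 ≤ c2SqAt F x := by
  unfold c2SqAt; positivity

lemma c2SqAt_le_one {F : V2 → ℝ} (h : C2NormLE F 1) (x : V2) : c2SqAt F x ≤ 1 := by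
  have h1 := h x
  have h2 := c2SqAt_nonneg F x
  nlinarith [Real.sq_sqrt h2, Real.sqrt_nonneg (c2SqAt F x)]

-- all six coefficient bounds

lemma abs_le_one_of_sq_le {a s : ℝ} (h1 : a^2 ≤ s) (h2 : s ≤ 1) : |a| ≤ 1 := by
  nlinarith [sq_abs a, abs_nonneg a]

lemma bd_F {F : V2 → ℝ} (h : C2NormLE F 1) (x : V2) : |F x| ≤ 1 := by
  refine abs_le_one_of_sq_le ?_ (c2SqAt_le_one h x); unfold c2SqAt; nlinarith [sq_nonneg (pd 0 F x), sq_nonneg (pd 1 F x), sq_nonneg (pd 0 (pd 0 F) x), sq_nonneg (pd 0 (pd 1 F) x), sq_nonneg (pd 1 (pd 1 F) x)]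

lemma bd_pd0 {F : V2 → ℝ} (h : C2NormLE F 1) (x : V2) : |pd 0 F x| ≤ 1 := by
  refine abs_le_one_of_sq_le ?_ (c2SqAt_le_one h x); unfold c2SqAt
  nlinarith [sq_nonneg (F x), sq_nonneg (pd 1 F x), sq_nonneg (pd 0 (pd 0 F) x), sq_nonneg (pd 0 (pd 1 F) x), sq_nonneg (pd 1 (pd 1 F) x)]

lemma bd_pd1 {F : V2 → ℝ} (h : C2NormLE F 1) (x : V2) : |pd 1 F x| ≤ 1 := by
  refine abs_le_one_of_sq_le ?_ (c2SqAt_le_one h x); unfold c2SqAt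
  nlinarith [sq_nonneg (F x), sq_nonneg (pd 0 F x), sq_nonneg (pd 0 (pd 0 F) x), sq_nonneg (pd 0 (pd 1 F) x), sq_nonneg (pd 1 (pd 1 F) x)]

lemma bd_pd {F : V2 → ℝ} (h : C2NormLE F 1) (i : Fin 2) (x : V2) : |pd i F x| ≤ 1 := by
  fin_cases i
  · exact bd_pd0 h x
  · exact bd_pd1 h x

lemma bd_pd2 {F : V2 → ℝ} (h : C2NormLE F 1) (x : V2) :
    |pd 0 (pd 0 F) x| ≤ 1 ∧ |pd 0 (pd 1 F) x| ≤ 1 ∧ |pd 1 (pd 1 F) x| ≤ 1 := by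
  refine ⟨abs_le_one_of_sq_le ?_ (c2SqAt_le_one h x), abs_le_one_of_sq_le ?_ (c2SqAt_le_one h x),
    abs_le_one_of_sq_le ?_ (c2SqAt_le_one h x)⟩ <;> unfold c2SqAt <;>
    nlinarith [sq_nonneg (F x), sq_nonneg (pd 0 F x), sq_nonneg (pd 1 F x), sq_nonneg (pd 0 (pd 0 F) x), sq_nonneg (pd 0 (pd 1 F) x), sq_nonneg (pd 1 (pd 1 F) x)]

-- differentiability

lemma fderiv_contDiff {F : V2 → ℝ} (hF : ContDiff ℝ 2 F) :
    ContDiff ℝ 1 (fun x => fderiv ℝ F x) :=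
  hF.fderiv_right (by norm_num)

lemma pd_differentiable {F : V2 → ℝ} (hF : ContDiff ℝ 2 F) (j : Fin 2) :
    Differentiable ℝ (pd j F) := by
  have h1 : Differentiable ℝ (fun x => fderiv ℝ F x) := (fderiv_contDiff hF).differentiable (by norm_num)
  intro x
  have hcomp : pd j F = (ContinuousLinearMap.apply ℝ ℝ (EuclideanSpace.single j (1:ℝ))) ∘
      (fun z => fderiv ℝ F z) := rfl
  rw [hcomp]
  exact ((ContinuousLinearMap.apply ℝ ℝ (EuclideanSpace.single j 1)).differentiableAt).comp x (h1 x)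

-- Schwarz: pd 1 (pd 0 F) = pd 0 (pd 1 F)

lemma schwarz {F : V2 → ℝ} (hF : ContDiff ℝ 2 F) (x : V2) :
    pd 1 (pd 0 F) x = pd 0 (pd 1 F) x := by
  have hsymm : IsSymmSndFDerivAt ℝ F x := hF.contDiffAt.isSymmSndFDerivAt (by norm_num)
  have h1 : Differentiable ℝ (fun x => fderiv ℝ F x) := (fderiv_contDiff hF).differentiable (by norm_num)
  have key : ∀ (j i : Fin 2), pd i (pd j F) x =
      fderiv ℝ (fderiv ℝ F) x (EuclideanSpace.single i 1) (EuclideanSpace.single j 1) := by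
    intro j i
    have hcomp : pd j F = (ContinuousLinearMap.apply ℝ ℝ (EuclideanSpace.single j (1:ℝ))) ∘
        (fun z => fderiv ℝ F z) := rfl
    show fderiv ℝ (pd j F) x (EuclideanSpace.single i 1) = _
    rw [hcomp, fderiv_comp x ((ContinuousLinearMap.apply ℝ ℝ _).differentiableAt) (h1 x),
      ContinuousLinearMap.fderiv]
    simp
  rw [key 0 1, key 1 0]
  exact hsymm _ _

-- Lipschitz bound for gradient components

lemma pd_lipschitz {F : V2 → ℝ} (hF : ContDiff ℝ 2 F) (hN : C2NormLE F 1) (j : Fin 2)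
    (a b : V2) : |pd j F b - pd j F a| ≤ 2 * ‖b - a‖ := by
  have hdiff := pd_differentiable hF j
  have hbound : ∀ z : V2, ‖fderiv ℝ (pd j F) z‖ ≤ 2 := by
    intro z
    refine (opNorm_le_coords _).trans ?_
    have e0 : fderiv ℝ (pd j F) z (EuclideanSpace.single 0 1) = pd 0 (pd j F) z := rfl
    have e1 : fderiv ℝ (pd j F) z (EuclideanSpace.single 1 1) = pd 1 (pd j F) z := rfl
    rw [e0, e1]
    obtain ⟨h00, h01, h11⟩ := bd_pd2 hN z
    have hj : j = 0 ∨ j = 1 := by fin_cases j; exacts [Or.inl rfl, Or.inr rfl]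
    rcases hj with rfl | rfl
    · rw [schwarz hF z]; linarith
    · linarith
  have := Convex.norm_image_sub_le_of_norm_fderiv_le (f := pd j F) (s := Set.univ)
    (fun x _ => hdiff x) (fun x _ => hbound x) convex_univ
    (Set.mem_univ a) (Set.mem_univ b)
  simpa [Real.norm_eq_abs] using this

-- second order Taylor bound

lemma taylor_bound {F : V2 → ℝ} (hF : ContDiff ℝ 2 F) (hN : C2NormLE F 1) (a b : V2) :
    |F b - F a - fderiv ℝ F a (b - a)| ≤ 4 * ‖b - a‖ ^ 2 := by
  set L := fderiv ℝ F a with hL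
  have hFd : Differentiable ℝ F := hF.differentiable (by norm_num)
  set G : V2 → ℝ := fun y => F y - L y with hG
  have hGdiff : ∀ z : V2, DifferentiableAt ℝ G z := fun z => (hFd z).sub L.differentiableAt
  have hGderiv : ∀ z : V2, fderiv ℝ G z = fderiv ℝ F z - L := by
    intro z
    rw [hG]
    rw [fderiv_fun_sub (hFd z) L.differentiableAt, L.fderiv]
  have hbound : ∀ z ∈ Metric.closedBall a ‖b - a‖, ‖fderiv ℝ G z‖ ≤ 4 * ‖b - a‖ := by
    intro z hz
    rw [hGderiv z]
    refine (opNorm_le_coords _).trans ?_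
    have e0 : (fderiv ℝ F z - L) (EuclideanSpace.single 0 1) = pd 0 F z - pd 0 F a := rfl
    have e1 : (fderiv ℝ F z - L) (EuclideanSpace.single 1 1) = pd 1 F z - pd 1 F a := rfl
    rw [e0, e1]
    have hz' : ‖z - a‖ ≤ ‖b - a‖ := by
      rw [Metric.mem_closedBall, dist_eq_norm] at hz; exact hz
    have l0 := pd_lipschitz hF hN 0 a z
    have l1 := pd_lipschitz hF hN 1 a z
    linarith
  have hsub : Convex ℝ (Metric.closedBall a ‖b - a‖) := convex_closedBall _ _
  have hmem_a : a ∈ Metric.closedBall a ‖b - a‖ := by simp [Metric.mem_closedBall]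
  have hmem_b : b ∈ Metric.closedBall a ‖b - a‖ := by
    simp [Metric.mem_closedBall, dist_eq_norm]
  have key := Convex.norm_image_sub_le_of_norm_fderiv_le (f := G)
    (fun x _ => hGdiff x) hbound hsub hmem_a hmem_b
  have : G b - G a = F b - F a - L (b - a) := by
    rw [hG]; rw [map_sub]; ring
  rw [this] at key
  rw [Real.norm_eq_abs] at key
  calc |F b - F a - L (b - a)| ≤ 4 * ‖b - a‖ * ‖b - a‖ := key
    _ = 4 * ‖b - a‖ ^ 2 := by ring

lemma jet_eval (x : V2) (F : V2 → ℝ) : jet x F x = F x := by simp [jet]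

lemma pd_jet (x : V2) (F : V2 → ℝ) (i : Fin 2) (z : V2) :
    pd i (jet x F) z = fderiv ℝ F x (EuclideanSpace.single i 1) := by
  unfold pd jet
  rw [fderiv_affine]

lemma zero_mem_sigmaSharp (E : Finset V2) (y : V2) (k : ℕ) :
    (fun _ : V2 => (0:ℝ)) ∈ sigmaSharp E y k := by
  intro S _ _
  refine ⟨fun _ => 0, contDiff_const, fun _ _ => rfl, ?_, ?_⟩
  · intro x
    have h0 : ∀ i : Fin 2, pd i (fun _ : V2 => (0:ℝ)) = fun _ => 0 := by
      intro i; funext z; unfold pd; rw [fderiv_fun_const]; simp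
    have hc : c2SqAt (fun _ : V2 => (0:ℝ)) x = 0 := by
      unfold c2SqAt
      rw [h0 0, h0 1]
      have h00 : pd 0 (fun _ : V2 => (0:ℝ)) = fun _ => 0 := h0 0
      simp [h0]
    rw [hc]; simp
  · funext z; unfold jet; rw [fderiv_fun_const]; simp

lemma sigmaSharp_coord_bounds {E : Finset V2} {y : V2} {k : ℕ} {P : V2 → ℝ}
    (hP : P ∈ sigmaSharp E y k) : |P y| ≤ 1 ∧ |pd 0 P y| ≤ 1 ∧ |pd 1 P y| ≤ 1 := by
  obtain ⟨F, hF, _, hN, hjet⟩ := hP ∅ (by simp) (by simp)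
  rw [← hjet]
  refine ⟨?_, ?_, ?_⟩
  · rw [jet_eval]; exact bd_F hN y
  · rw [pd_jet]; exact bd_pd0 hN y
  · rw [pd_jet]; exact bd_pd1 hN y

lemma le_sigmaSharpDiam {E : Finset V2} {y : V2} {k : ℕ} {P₁ P₂ : V2 → ℝ}
    (h1 : P₁ ∈ sigmaSharp E y k) (h2 : P₂ ∈ sigmaSharp E y k) :
    Real.sqrt ((pd 0 P₁ y - pd 0 P₂ y) ^ 2 + (pd 1 P₁ y - pd 1 P₂ y) ^ 2 +
      (P₁ y - P₂ y) ^ 2) ≤ sigmaSharpDiam E y k := by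
  classical
  set S := sigmaSharp E y k with hS
  set f : (V2 → ℝ) → (V2 → ℝ) → ℝ := fun P P' =>
    Real.sqrt ((pd 0 P y - pd 0 P' y) ^ 2 + (pd 1 P y - pd 1 P' y) ^ 2 + (P y - P' y) ^ 2)
    with hf
  have hfb : ∀ P P', P ∈ S → P' ∈ S → f P P' ≤ 4 := by
    intro P P' hP hP'
    obtain ⟨b1, b2, b3⟩ := sigmaSharp_coord_bounds hP
    obtain ⟨c1, c2, c3⟩ := sigmaSharp_coord_bounds hP'
    have : (pd 0 P y - pd 0 P' y) ^ 2 + (pd 1 P y - pd 1 P' y) ^ 2 + (P y - P' y) ^ 2 ≤ 16 := by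
      have d1 : |pd 0 P y - pd 0 P' y| ≤ 2 := by
        calc |pd 0 P y - pd 0 P' y| ≤ |pd 0 P y| + |pd 0 P' y| := abs_sub _ _
          _ ≤ 2 := by linarith
      have d2 : |pd 1 P y - pd 1 P' y| ≤ 2 := by
        calc |pd 1 P y - pd 1 P' y| ≤ |pd 1 P y| + |pd 1 P' y| := abs_sub _ _
          _ ≤ 2 := by linarith
      have d3 : |P y - P' y| ≤ 2 := by
        calc |P y - P' y| ≤ |P y| + |P' y| := abs_sub _ _
          _ ≤ 2 := by linarith
      nlinarith [sq_abs (pd 0 P y - pd 0 P' y), sq_abs (pd 1 P y - pd 1 P' y),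
        sq_abs (P y - P' y), abs_nonneg (pd 0 P y - pd 0 P' y),
        abs_nonneg (pd 1 P y - pd 1 P' y), abs_nonneg (P y - P' y)]
    calc f P P' ≤ Real.sqrt 16 := Real.sqrt_le_sqrt this
      _ = 4 := by
        rw [show (16:ℝ) = 4^2 by norm_num, Real.sqrt_sq (by norm_num)]
  -- inner sup function
  set g : (V2 → ℝ) → ℝ := fun P => ⨆ P', ⨆ (_ : P' ∈ S), f P P' with hg
  have hinner_le : ∀ P, P ∈ S → ∀ P', (⨆ (_ : P' ∈ S), f P P') ≤ 4 := by
    intro P hP P'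
    by_cases hP' : P' ∈ S
    · rw [ciSup_pos hP']; exact hfb P P' hP hP'
    · haveI : IsEmpty (P' ∈ S) := ⟨hP'⟩
      rw [Real.iSup_of_isEmpty]; norm_num
  have hstepA : f P₁ P₂ ≤ g P₁ := by
    have heq : (⨆ (_ : P₂ ∈ S), f P₁ P₂) = f P₁ P₂ := ciSup_pos h2
    rw [← heq, hg]
    exact le_ciSup (f := fun P' => ⨆ (_ : P' ∈ S), f P₁ P')
      ⟨4, by rintro v ⟨P', rfl⟩; exact hinner_le P₁ h1 P'⟩ P₂
  have hstepB : g P₁ ≤ sigmaSharpDiam E y k := by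
    have houter : ∀ P, (⨆ (_ : P ∈ S), g P) ≤ 4 := by
      intro P
      by_cases hP : P ∈ S
      · rw [ciSup_pos hP]
        exact Real.iSup_le (fun P' => hinner_le P hP P') (by norm_num)
      · haveI : IsEmpty (P ∈ S) := ⟨hP⟩
        rw [Real.iSup_of_isEmpty]; norm_num
    have heq : (⨆ (_ : P₁ ∈ S), g P₁) = g P₁ := ciSup_pos h1
    rw [← heq]
    exact le_ciSup (f := fun P => ⨆ (_ : P ∈ S), g P)
      ⟨4, by rintro v ⟨P, rfl⟩; exact houter P⟩ P₁
  exact hstepA.trans hstepB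

lemma pd_add_smul (u v : V2 → ℝ) (hu : Differentiable ℝ u) (hv : Differentiable ℝ v)
    (a b : ℝ) (i : Fin 2) :
    pd i (fun y => a * u y + b * v y) = fun z => a * pd i u z + b * pd i v z := by
  funext z
  unfold pd
  have h1 : fderiv ℝ (fun y => a * u y + b * v y) z
      = a • fderiv ℝ u z + b • fderiv ℝ v z := by
    rw [fderiv_fun_add ((hu z).const_mul a) ((hv z).const_mul b),
      fderiv_const_mul (hu z) a, fderiv_const_mul (hv z) b]
  rw [h1]
  simp

lemma sqrt6_tri (u v : Fin 6 → ℝ) (a b : ℝ) (ha : 0 ≤ a) (hb : 0 ≤ b) :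
    Real.sqrt (∑ i, (a * u i + b * v i) ^ 2) ≤
      a * Real.sqrt (∑ i, (u i) ^ 2) + b * Real.sqrt (∑ i, (v i) ^ 2) := by
  set U : EuclideanSpace ℝ (Fin 6) := (WithLp.equiv 2 _).symm u with hU
  set V : EuclideanSpace ℝ (Fin 6) := (WithLp.equiv 2 _).symm v with hV
  have hnorm : ∀ w : Fin 6 → ℝ, ‖(WithLp.equiv 2 (Fin 6 → ℝ)).symm w‖
      = Real.sqrt (∑ i, (w i) ^ 2) := by
    intro w
    rw [EuclideanSpace.norm_eq]
    congr 1
    apply Finset.sum_congr rfl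
    intro i _
    rw [Real.norm_eq_abs, sq_abs]
    rfl
  have key : ‖a • U + b • V‖ ≤ a * ‖U‖ + b * ‖V‖ := by
    calc ‖a • U + b • V‖ ≤ ‖a • U‖ + ‖b • V‖ := norm_add_le _ _
      _ = a * ‖U‖ + b * ‖V‖ := by
        rw [norm_smul, norm_smul, Real.norm_eq_abs, Real.norm_eq_abs,
          abs_of_nonneg ha, abs_of_nonneg hb]
  have hcombo : a • U + b • V = (WithLp.equiv 2 (Fin 6 → ℝ)).symm (fun i => a * u i + b * v i) := by
    ext i
    simp [hU, hV]
  rw [hcombo, hnorm] at key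
  rw [hnorm, hnorm] at key
  exact key

lemma c2SqAt_eq_sum (F : V2 → ℝ) (x : V2) :
    c2SqAt F x = ∑ i, (![F x, pd 0 F x, pd 1 F x, pd 0 (pd 0 F) x, pd 0 (pd 1 F) x,
      pd 1 (pd 1 F) x] i) ^ 2 := by
  simp [Fin.sum_univ_succ, c2SqAt]
  ring

lemma combo_C2NormLE {F G : V2 → ℝ} (hF : ContDiff ℝ 2 F) (hG : ContDiff ℝ 2 G)
    (hNF : C2NormLE F 1) (hNG : C2NormLE G 1) {a b : ℝ} (ha : 0 ≤ a) (hb : 0 ≤ b)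
    (hab : a + b = 1) : C2NormLE (fun y => a * F y + b * G y) 1 := by
  intro x
  set H : V2 → ℝ := fun y => a * F y + b * G y with hH
  have hFd : Differentiable ℝ F := hF.differentiable (by norm_num)
  have hGd : Differentiable ℝ G := hG.differentiable (by norm_num)
  have e1 : ∀ i, pd i H = fun z => a * pd i F z + b * pd i G z := fun i =>
    pd_add_smul F G hFd hGd a b i
  have e2 : ∀ i j, pd i (pd j H) = fun z => a * pd i (pd j F) z + b * pd i (pd j G) z := by
    intro i j
    rw [e1 j]
    exact pd_add_smul (pd j F) (pd j G) (pd_differentiable hF j) (pd_differentiable hG j) a b i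
  have hsum : c2SqAt H x = ∑ i, (a * (![F x, pd 0 F x, pd 1 F x, pd 0 (pd 0 F) x,
      pd 0 (pd 1 F) x, pd 1 (pd 1 F) x] i) + b * (![G x, pd 0 G x, pd 1 G x, pd 0 (pd 0 G) x,
      pd 0 (pd 1 G) x, pd 1 (pd 1 G) x] i)) ^ 2 := by
    unfold c2SqAt
    rw [e2 0 0, e2 0 1, e2 1 1, e1 0, e1 1]
    simp [Fin.sum_univ_succ]
    ring
  rw [hsum]
  calc Real.sqrt _ ≤ a * Real.sqrt (∑ i, (![F x, pd 0 F x, pd 1 F x, pd 0 (pd 0 F) x,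
        pd 0 (pd 1 F) x, pd 1 (pd 1 F) x] i) ^ 2) + b * Real.sqrt (∑ i, (![G x, pd 0 G x,
        pd 1 G x, pd 0 (pd 0 G) x, pd 0 (pd 1 G) x, pd 1 (pd 1 G) x] i) ^ 2) :=
      sqrt6_tri _ _ a b ha hb
    _ ≤ a * 1 + b * 1 := by
      gcongr
      · rw [← c2SqAt_eq_sum]; exact hNF x
      · rw [← c2SqAt_eq_sum]; exact hNG x
    _ = 1 := by rw [mul_one, mul_one]; exact hab

lemma helly_step (E : Finset V2) (k : ℕ) (hk : 1 ≤ k) (yh xr : V2) (hyE : yh ∈ E)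
    {P : V2 → ℝ} (hP : P ∈ sigmaSharp E xr (4 * k)) {R : ℝ} (hR : dist xr yh ≤ R) :
    ∃ P' ∈ sigmaSharp E yh k, P' yh = 0 ∧
      |pd 0 P' yh - pd 0 P xr| ≤ 2 * R ∧ |pd 1 P' yh - pd 1 P xr| ≤ 2 * R := by
  classical
  set g0 := pd 0 P xr with hg0
  set g1 := pd 1 P xr with hg1
  set A : Finset V2 → Set (Fin 3 → ℝ) := fun T =>
    {p | ∃ F : V2 → ℝ, ContDiff ℝ 2 F ∧ (∀ y ∈ T, F y = 0) ∧ C2NormLE F 1 ∧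
      p 0 = pd 0 F yh ∧ p 1 = pd 1 F yh ∧ p 2 = F yh} with hA
  set K : Set (Fin 3 → ℝ) :=
    {p | p 2 = 0 ∧ |p 0 - g0| ≤ 2 * R ∧ |p 1 - g1| ≤ 2 * R} with hK
  set FF : Option (Finset V2) → Set (Fin 3 → ℝ) := fun o => o.elim K A with hFF
  set s : Finset (Option (Finset V2)) :=
    insert none ((E.powerset.filter (fun T => T.card ≤ k)).image some) with hs
  have hmem : ∀ o ∈ s, o = none ∨ ∃ T, o = some T ∧ T ⊆ E ∧ T.card ≤ k := by
    intro o ho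
    rw [hs, Finset.mem_insert] at ho
    rcases ho with h | h
    · exact Or.inl h
    · right
      obtain ⟨T, hT, rfl⟩ := Finset.mem_image.mp h
      rw [Finset.mem_filter, Finset.mem_powerset] at hT
      exact ⟨T, rfl, hT.1, hT.2⟩
  -- gradient identification for any witness of P
  have hgrad : ∀ F : V2 → ℝ, jet xr F = P →
      pd 0 F xr = g0 ∧ pd 1 F xr = g1 := by
    intro F hjet
    constructor
    · rw [hg0, ← hjet, pd_jet]; rfl
    · rw [hg1, ← hjet, pd_jet]; rfl
  -- 4-wise intersections
  have hint : ∀ I ⊆ s, I.card ≤ 4 → (⋂ o ∈ I, FF o).Nonempty := by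
    intro I hIs hI4
    have hcard_el : ∀ o ∈ I, (o.elim ∅ id : Finset V2).card ≤ k := by
      intro o ho
      rcases hmem o (hIs ho) with rfl | ⟨T, rfl, _, hTk⟩
      · simp
      · simpa using hTk
    have hsub_el : ∀ o ∈ I, (o.elim ∅ id : Finset V2) ⊆ E := by
      intro o ho
      rcases hmem o (hIs ho) with rfl | ⟨T, rfl, hTE, _⟩
      · simp
      · simpa using hTE
    by_cases hnone : none ∈ I
    · set B := (I.erase none).biUnion (fun o => o.elim ∅ id) with hB
      set S₀ := insert yh B with hS₀
      have hsub : S₀ ⊆ E := by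
        rw [hS₀]
        intro z hz
        rcases Finset.mem_insert.mp hz with rfl | hz
        · exact hyE
        · obtain ⟨o, ho, hzo⟩ := Finset.mem_biUnion.mp hz
          exact hsub_el o (Finset.mem_of_mem_erase ho) hzo
      have hcard : S₀.card ≤ 4 * k := by
        have h1 : B.card ≤ (I.erase none).card * k := by
          calc B.card ≤ ∑ o ∈ I.erase none, (o.elim ∅ id : Finset V2).card :=
            Finset.card_biUnion_le
          _ ≤ (I.erase none).card * k := by
            rw [← smul_eq_mul]
            exact Finset.sum_le_card_nsmul _ _ k
              (fun o ho => hcard_el o (Finset.mem_of_mem_erase ho))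
        have h2 : (I.erase none).card ≤ 3 := by
          rw [Finset.card_erase_of_mem hnone]
          omega
        calc S₀.card ≤ B.card + 1 := Finset.card_insert_le _ _
          _ ≤ 3 * k + 1 := by nlinarith
          _ ≤ 4 * k := by omega
      obtain ⟨F, hF, hvan, hN, hjet⟩ := hP S₀ hsub hcard
      refine ⟨![pd 0 F yh, pd 1 F yh, F yh], ?_⟩
      rw [Set.mem_iInter₂]
      intro o ho
      rcases hmem o (hIs ho) with rfl | ⟨T, rfl, _, _⟩
      · show _ ∈ K
        rw [hK]
        obtain ⟨hgg0, hgg1⟩ := hgrad F hjet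
        have hFyh : F yh = 0 := hvan yh (Finset.mem_insert_self _ _)
        refine ⟨by simpa using hFyh, ?_, ?_⟩
        · show |pd 0 F yh - g0| ≤ 2 * R
          rw [← hgg0]
          calc |pd 0 F yh - pd 0 F xr| ≤ 2 * ‖yh - xr‖ := pd_lipschitz hF hN 0 xr yh
            _ ≤ 2 * R := by
              have : ‖yh - xr‖ = dist xr yh := by rw [dist_comm, dist_eq_norm]
              rw [this]; linarith
        · show |pd 1 F yh - g1| ≤ 2 * R
          rw [← hgg1]
          calc |pd 1 F yh - pd 1 F xr| ≤ 2 * ‖yh - xr‖ := pd_lipschitz hF hN 1 xr yh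
            _ ≤ 2 * R := by
              have : ‖yh - xr‖ = dist xr yh := by rw [dist_comm, dist_eq_norm]
              rw [this]; linarith
      · show _ ∈ A T
        refine ⟨F, hF, ?_, hN, rfl, rfl, rfl⟩
        intro z hz
        apply hvan
        rw [hS₀]
        apply Finset.mem_insert_of_mem
        rw [hB]
        apply Finset.mem_biUnion.mpr
        exact ⟨some T, Finset.mem_erase.mpr ⟨by simp, ho⟩, by simpa using hz⟩
    · set S₀ := I.biUnion (fun o => o.elim ∅ id) with hS₀
      have hsub : S₀ ⊆ E := by
        intro z hz
        obtain ⟨o, ho, hzo⟩ := Finset.mem_biUnion.mp hz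
        exact hsub_el o ho hzo
      have hcard : S₀.card ≤ 4 * k := by
        calc S₀.card ≤ ∑ o ∈ I, (o.elim ∅ id : Finset V2).card := Finset.card_biUnion_le
          _ ≤ I.card * k := by
            rw [← smul_eq_mul]
            exact Finset.sum_le_card_nsmul _ _ k hcard_el
          _ ≤ 4 * k := by
            have := hI4; nlinarith
      obtain ⟨F, hF, hvan, hN, hjet⟩ := hP S₀ hsub hcard
      refine ⟨![pd 0 F yh, pd 1 F yh, F yh], ?_⟩
      rw [Set.mem_iInter₂]
      intro o ho
      rcases hmem o (hIs ho) with rfl | ⟨T, rfl, _, _⟩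
      · exact absurd ho hnone
      · show _ ∈ A T
        refine ⟨F, hF, ?_, hN, rfl, rfl, rfl⟩
        intro z hz
        apply hvan
        rw [hS₀]
        apply Finset.mem_biUnion.mpr
        exact ⟨some T, ho, by simpa using hz⟩
  -- convexity
  have hconv : ∀ o ∈ s, Convex ℝ (FF o) := by
    intro o _
    match o with
    | none =>
      show Convex ℝ K
      rw [hK]
      intro p hp q hq a b ha hb hab
      obtain ⟨hp2, hp0, hp1⟩ := hp
      obtain ⟨hq2, hq0, hq1⟩ := hq
      refine ⟨?_, ?_, ?_⟩
      · show (a • p + b • q) 2 = 0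
        simp [Pi.add_apply, Pi.smul_apply, smul_eq_mul, hp2, hq2]
      · show |(a • p + b • q) 0 - g0| ≤ 2 * R
        rw [show (a • p + b • q) 0 = a * p 0 + b * q 0 from rfl]
        have : a * p 0 + b * q 0 - g0 = a * (p 0 - g0) + b * (q 0 - g0) := by
          linear_combination g0 * hab
        rw [this]
        calc |a * (p 0 - g0) + b * (q 0 - g0)| ≤ |a * (p 0 - g0)| + |b * (q 0 - g0)| :=
            abs_add_le _ _
          _ = a * |p 0 - g0| + b * |q 0 - g0| := by
            rw [abs_mul, abs_mul, abs_of_nonneg ha, abs_of_nonneg hb]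
          _ ≤ a * (2 * R) + b * (2 * R) := by
            have h2R : (0:ℝ) ≤ 2 * R := le_trans (abs_nonneg _) hp0 |>.trans (le_refl _)
            gcongr
          _ = 2 * R := by rw [← add_mul, hab, one_mul]
      · show |(a • p + b • q) 1 - g1| ≤ 2 * R
        rw [show (a • p + b • q) 1 = a * p 1 + b * q 1 from rfl]
        have : a * p 1 + b * q 1 - g1 = a * (p 1 - g1) + b * (q 1 - g1) := by
          linear_combination g1 * hab
        rw [this]
        calc |a * (p 1 - g1) + b * (q 1 - g1)| ≤ |a * (p 1 - g1)| + |b * (q 1 - g1)| :=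
            abs_add_le _ _
          _ = a * |p 1 - g1| + b * |q 1 - g1| := by
            rw [abs_mul, abs_mul, abs_of_nonneg ha, abs_of_nonneg hb]
          _ ≤ a * (2 * R) + b * (2 * R) := by
            have h2R : (0:ℝ) ≤ 2 * R := le_trans (abs_nonneg _) hp1 |>.trans (le_refl _)
            gcongr
          _ = 2 * R := by rw [← add_mul, hab, one_mul]
    | some T =>
      show Convex ℝ (A T)
      rw [hA]
      intro p hp q hq a b ha hb hab
      obtain ⟨F, hF, hvanF, hNF, hp0, hp1, hp2⟩ := hp
      obtain ⟨G, hG, hvanG, hNG, hq0, hq1, hq2⟩ := hq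
      refine ⟨fun y => a * F y + b * G y,
        (contDiff_const.mul hF).add (contDiff_const.mul hG),
        fun z hz => by show a * F z + b * G z = 0; rw [hvanF z hz, hvanG z hz]; ring,
        combo_C2NormLE hF hG hNF hNG ha hb hab, ?_, ?_, ?_⟩
      · show (a • p + b • q) 0 = _
        rw [pd_add_smul F G (hF.differentiable (by norm_num)) (hG.differentiable (by norm_num))]
        simp [Pi.add_apply, Pi.smul_apply, smul_eq_mul, hp0, hq0]
      · show (a • p + b • q) 1 = _
        rw [pd_add_smul F G (hF.differentiable (by norm_num)) (hG.differentiable (by norm_num))]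
        simp [Pi.add_apply, Pi.smul_apply, smul_eq_mul, hp1, hq1]
      · show (a • p + b • q) 2 = _
        simp [Pi.add_apply, Pi.smul_apply, smul_eq_mul, hp2, hq2]
  -- apply Helly
  have hfinrank : Module.finrank ℝ (Fin 3 → ℝ) + 1 = 4 := by
    rw [Module.finrank_fin_fun]
  obtain ⟨p, hp⟩ := Convex.helly_theorem' (𝕜 := ℝ) (F := FF) (s := s) hconv
    (by intro I hI hcard; exact hint I hI (by omega))
  rw [Set.mem_iInter₂] at hp
  have hpK : p ∈ K := hp none (Finset.mem_insert_self _ _)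
  obtain ⟨hp2, hp0, hp1⟩ := hpK
  -- build the polynomial
  set L : V2 →L[ℝ] ℝ := p 0 • EuclideanSpace.proj (0 : Fin 2) + p 1 • EuclideanSpace.proj 1
    with hL
  have hLv : ∀ v : V2, L v = p 0 * v 0 + p 1 * v 1 := by
    intro v
    rw [hL]
    simp [smul_eq_mul]
  set P' : V2 → ℝ := fun y => p 2 + L (y - yh) with hP'
  have hP'mem : P' ∈ sigmaSharp E yh k := by
    intro T hTE hTk
    have hsT : some T ∈ s := by
      rw [hs]
      apply Finset.mem_insert_of_mem
      apply Finset.mem_image_of_mem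
      rw [Finset.mem_filter, Finset.mem_powerset]
      exact ⟨hTE, hTk⟩
    obtain ⟨F, hF, hvan, hN, h0, h1, h2⟩ := hp (some T) hsT
    refine ⟨F, hF, hvan, hN, ?_⟩
    funext y
    show F yh + fderiv ℝ F yh (y - yh) = p 2 + L (y - yh)
    rw [hLv, clm_decomp (fderiv ℝ F yh) (y - yh)]
    have e0 : fderiv ℝ F yh (EuclideanSpace.single 0 1) = pd 0 F yh := rfl
    have e1 : fderiv ℝ F yh (EuclideanSpace.single 1 1) = pd 1 F yh := rfl
    rw [e0, e1, ← h0, ← h1, ← h2]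
    ring
  have hP'yh : P' yh = 0 := by
    show p 2 + L (yh - yh) = 0
    rw [hLv]
    have : yh - yh = (0 : V2) := sub_self yh
    rw [this]
    show p 2 + (p 0 * (0:V2) 0 + p 1 * (0:V2) 1) = 0
    norm_num [hp2]
  have hpd : ∀ i : Fin 2, pd i P' yh = p (Fin.castSucc i) := by
    intro i
    have : pd i P' yh = L (EuclideanSpace.single i 1) := by
      show fderiv ℝ (fun y => p 2 + L (y - yh)) yh (EuclideanSpace.single i 1) = _
      rw [fderiv_affine]
    rw [this, hLv]
    fin_cases i <;> simp [EuclideanSpace.single_apply]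
  refine ⟨P', hP'mem, hP'yh, ?_, ?_⟩
  · rw [hpd 0]; exact hp0
  · rw [hpd 1]; exact hp1

lemma pd_zero (i : Fin 2) (z : V2) : pd i (fun _ : V2 => (0:ℝ)) z = 0 := by
  unfold pd; rw [fderiv_fun_const]; simp

set_option maxHeartbeats 2000000 in

lemma dist_le_of_parent_double (Q : Sq) (hlen : 0 < Q.len) (xr yh : V2)
    (hx : xr ∈ Q.carrier) (hy : yh ∈ Q.parent.double) : dist xr yh ≤ 6 * Q.len := by
  obtain ⟨hx0, hx0', hx1, hx1'⟩ := hx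
  obtain ⟨hy0, hy0', hy1, hy1'⟩ := hy
  simp only [Sq.parent] at hy0 hy0' hy1 hy1'
  have f0 : (⌊Q.s / (2 * Q.len)⌋ : ℝ) ≤ Q.s / (2 * Q.len) := Int.floor_le _
  have f0' : Q.s / (2 * Q.len) < (⌊Q.s / (2 * Q.len)⌋ : ℝ) + 1 := Int.lt_floor_add_one _
  have f1 : (⌊Q.t / (2 * Q.len)⌋ : ℝ) ≤ Q.t / (2 * Q.len) := Int.floor_le _
  have f1' : Q.t / (2 * Q.len) < (⌊Q.t / (2 * Q.len)⌋ : ℝ) + 1 := Int.lt_floor_add_one _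
  have h2l : (0:ℝ) < 2 * Q.len := by linarith
  have hsl : (Q.s / (2 * Q.len)) * (2 * Q.len) = Q.s := by field_simp
  have htl : (Q.t / (2 * Q.len)) * (2 * Q.len) = Q.t := by field_simp
  have g0 : 2 * Q.len * (⌊Q.s / (2 * Q.len)⌋ : ℝ) ≤ Q.s := by
    have h := mul_le_mul_of_nonneg_right f0 (le_of_lt h2l)
    rw [hsl] at h; linarith
  have g0' : Q.s < 2 * Q.len * (⌊Q.s / (2 * Q.len)⌋ : ℝ) + 2 * Q.len := by
    have h := mul_lt_mul_of_pos_right f0' h2l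
    rw [hsl] at h; linarith
  have g1 : 2 * Q.len * (⌊Q.t / (2 * Q.len)⌋ : ℝ) ≤ Q.t := by
    have h := mul_le_mul_of_nonneg_right f1 (le_of_lt h2l)
    rw [htl] at h; linarith
  have g1' : Q.t < 2 * Q.len * (⌊Q.t / (2 * Q.len)⌋ : ℝ) + 2 * Q.len := by
    have h := mul_lt_mul_of_pos_right f1' h2l
    rw [htl] at h; linarith
  have d0 : |xr 0 - yh 0| ≤ 4 * Q.len := by
    rw [abs_le]; constructor <;> nlinarith
  have d1 : |xr 1 - yh 1| ≤ 4 * Q.len := by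
    rw [abs_le]; constructor <;> nlinarith
  have hdist : dist xr yh = Real.sqrt (dist (xr 0) (yh 0) ^ 2 + dist (xr 1) (yh 1) ^ 2) := by
    rw [EuclideanSpace.dist_eq, Fin.sum_univ_two]
  rw [hdist, Real.dist_eq, Real.dist_eq]
  have hsum : |xr 0 - yh 0| ^ 2 + |xr 1 - yh 1| ^ 2 ≤ (6 * Q.len) ^ 2 := by
    nlinarith [abs_nonneg (xr 0 - yh 0), abs_nonneg (xr 1 - yh 1)]
  calc Real.sqrt (|xr 0 - yh 0| ^ 2 + |xr 1 - yh 1| ^ 2) ≤ Real.sqrt ((6 * Q.len) ^ 2) :=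
      Real.sqrt_le_sqrt hsum
    _ = 6 * Q.len := Real.sqrt_sq (by linarith)

/-- **Lemma 5.7.** Let `Q` be a dyadic square of side `≤ 1` such that either `δ_Q = 1` or
some `ŷ ∈ E ∩ (Q⁺)*` has `diam(σ^♯(ŷ, k)) < 2·C_nice·δ_Q`, and let `x^♯ ∈ Q` be at
distance at least `c_rep·δ_Q` from `E`.  Then `σ^♯(x^♯, 4k) ⊆ C·ℬ(x^♯, δ_Q)` for a
constant `C` depending only on `C_nice` and `c_rep`, i.e. every `P ∈ σ^♯(x^♯, 4k)`
satisfies `|∂^α P(x^♯)| ≤ C·δ_Q^{2−|α|}` for `|α| ≤ 1`. -/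
theorem sigmaSharp_subset_ball :
    ∀ Cnice crep : ℝ, 1 ≤ Cnice → 0 < crep →
      ∃ C : ℝ, 0 < C ∧
        ∀ (E : Finset V2) (k : ℕ) (Q : Sq) (xr : V2),
          1 ≤ k → Q.IsDyadic → Q.len ≤ 1 →
          xr ∈ Q.carrier →
          (∀ y ∈ E, crep * Q.len ≤ dist xr y) →
          (Q.len = 1 ∨
            ∃ yh ∈ E, (yh : V2) ∈ Q.parent.double ∧
              sigmaSharpDiam E yh k < 2 * Cnice * Q.len) →
          ∀ P ∈ sigmaSharp E xr (4 * k),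
            |P xr| ≤ C * Q.len ^ 2 ∧ ∀ i : Fin 2, |pd i P xr| ≤ C * Q.len := by
  intro Cnice crep hCnice _
  refine ⟨300 * Cnice + 300, by linarith, ?_⟩
  intro E k Q xr hk hdy hlen1 hxQ _ halt P hP
  set δ := Q.len with hδ
  have hδpos : 0 < δ := by
    obtain ⟨⟨m, hm⟩, _⟩ := hdy
    rw [hδ, hm]
    positivity
  have hC1 : (1:ℝ) ≤ 300 * Cnice + 300 := by linarith
  rcases halt with h1 | ⟨yh, hyE, hyD, hdiam⟩
  · -- trivial case δ = 1
    obtain ⟨F, hF, _, hN, hjet⟩ := hP ∅ (by simp) (by simp)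
    constructor
    · rw [← hjet, jet_eval, h1]
      calc |F xr| ≤ 1 := bd_F hN xr
        _ ≤ (300 * Cnice + 300) * 1 ^ 2 := by nlinarith
    · intro i
      rw [← hjet, pd_jet, h1]
      have : fderiv ℝ F xr (EuclideanSpace.single i 1) = pd i F xr := rfl
      rw [this]
      calc |pd i F xr| ≤ 1 := bd_pd hN i xr
        _ ≤ (300 * Cnice + 300) * 1 := by nlinarith
  · -- main case
    have hdist : dist xr yh ≤ 6 * δ := dist_le_of_parent_double Q hδpos xr yh hxQ hyD
    obtain ⟨P', hP'mem, hP'0, hb0, hb1⟩ :=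
      helly_step E k hk yh xr hyE hP (R := 6 * δ) hdist
    -- bound on the gradient of P' at yh via the diameter hypothesis
    have hdiam_le := le_sigmaSharpDiam hP'mem (zero_mem_sigmaSharp E yh k)
    simp only [pd_zero, sub_zero] at hdiam_le
    have hsqrt_lt : Real.sqrt ((pd 0 P' yh) ^ 2 + (pd 1 P' yh) ^ 2 + (P' yh) ^ 2)
        < 2 * Cnice * δ := lt_of_le_of_lt hdiam_le hdiam
    have hP'grad : ∀ i : Fin 2, |pd i P' yh| ≤ 2 * Cnice * δ := by
      intro i
      have hle : |pd i P' yh| ≤ Real.sqrt ((pd 0 P' yh) ^ 2 + (pd 1 P' yh) ^ 2 +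
          (P' yh) ^ 2) := by
        rw [show |pd i P' yh| = Real.sqrt ((pd i P' yh) ^ 2) by rw [Real.sqrt_sq_eq_abs]]
        apply Real.sqrt_le_sqrt
        have hi : i = 0 ∨ i = 1 := by fin_cases i; exacts [Or.inl rfl, Or.inr rfl]
        rcases hi with rfl | rfl <;> nlinarith [sq_nonneg (pd 0 P' yh), sq_nonneg (pd 1 P' yh),
          sq_nonneg (P' yh)]
      linarith [lt_of_le_of_lt hle hsqrt_lt]
    -- gradient bound for P
    have hgradP : ∀ i : Fin 2, |pd i P xr| ≤ 2 * Cnice * δ + 12 * δ := by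
      intro i
      have hi : i = 0 ∨ i = 1 := by fin_cases i; exacts [Or.inl rfl, Or.inr rfl]
      rcases hi with rfl | rfl
      · have h1 := hP'grad 0
        have h2 : |pd 0 P' yh - pd 0 P xr| ≤ 12 * δ := by linarith [hb0]
        have h3 : |pd 0 P xr| ≤ |pd 0 P' yh| + |pd 0 P' yh - pd 0 P xr| := by
          have h4 : |pd 0 P' yh - (pd 0 P' yh - pd 0 P xr)|
              ≤ |pd 0 P' yh| + |pd 0 P' yh - pd 0 P xr| := abs_sub _ _
          have e : pd 0 P' yh - (pd 0 P' yh - pd 0 P xr) = pd 0 P xr := by ring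
          rwa [e] at h4
        linarith
      · have h1 := hP'grad 1
        have h2 : |pd 1 P' yh - pd 1 P xr| ≤ 12 * δ := by linarith [hb1]
        have h3 : |pd 1 P xr| ≤ |pd 1 P' yh| + |pd 1 P' yh - pd 1 P xr| := by
          have h4 : |pd 1 P' yh - (pd 1 P' yh - pd 1 P xr)|
              ≤ |pd 1 P' yh| + |pd 1 P' yh - pd 1 P xr| := abs_sub _ _
          have e : pd 1 P' yh - (pd 1 P' yh - pd 1 P xr) = pd 1 P xr := by ring
          rwa [e] at h4
        linarith
    constructor
    · -- value bound via Taylor at yh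
      obtain ⟨F, hF, hvan, hN, hjet⟩ := hP {yh} (by simpa using hyE) (by simp; omega)
      have hFyh : F yh = 0 := hvan yh (Finset.mem_singleton_self yh)
      have htay := taylor_bound hF hN xr yh
      have hnorm : ‖yh - xr‖ = dist xr yh := by rw [dist_comm, dist_eq_norm]
      have hg : ∀ i : Fin 2, fderiv ℝ F xr (EuclideanSpace.single i 1) = pd i P xr := by
        intro i
        rw [← hjet, pd_jet]
      have hlin : |fderiv ℝ F xr (yh - xr)| ≤ (2 * Cnice * δ + 12 * δ) * (2 * (6 * δ)) := by
        rw [clm_decomp]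
        have c0 := coord_le_norm (yh - xr) 0
        have c1 := coord_le_norm (yh - xr) 1
        have hn6 : ‖yh - xr‖ ≤ 6 * δ := by rw [hnorm]; exact hdist
        have b0 : |fderiv ℝ F xr (EuclideanSpace.single 0 1)| ≤ 2 * Cnice * δ + 12 * δ := by
          rw [hg 0]; exact hgradP 0
        have b1 : |fderiv ℝ F xr (EuclideanSpace.single 1 1)| ≤ 2 * Cnice * δ + 12 * δ := by
          rw [hg 1]; exact hgradP 1
        calc |(yh - xr) 0 * fderiv ℝ F xr (EuclideanSpace.single 0 1) +
              (yh - xr) 1 * fderiv ℝ F xr (EuclideanSpace.single 1 1)|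
            ≤ |(yh - xr) 0| * |fderiv ℝ F xr (EuclideanSpace.single 0 1)| +
              |(yh - xr) 1| * |fderiv ℝ F xr (EuclideanSpace.single 1 1)| := by
              rw [← abs_mul, ← abs_mul]; exact abs_add_le _ _
          _ ≤ (6 * δ) * (2 * Cnice * δ + 12 * δ) + (6 * δ) * (2 * Cnice * δ + 12 * δ) := by
              have ha0 : |(yh - xr) 0| ≤ 6 * δ := le_trans c0 hn6
              have ha1 : |(yh - xr) 1| ≤ 6 * δ := le_trans c1 hn6
              have hnn : (0:ℝ) ≤ 2 * Cnice * δ + 12 * δ := by positivity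
              have m0 := mul_le_mul ha0 b0 (abs_nonneg _) (by positivity)
              have m1 := mul_le_mul ha1 b1 (abs_nonneg _) (by positivity)
              linarith
          _ = (2 * Cnice * δ + 12 * δ) * (2 * (6 * δ)) := by ring
      have hFxr : |F xr| ≤ (2 * Cnice * δ + 12 * δ) * (12 * δ) + 4 * (6 * δ) ^ 2 := by
        have hsq : ‖yh - xr‖ ^ 2 ≤ (6 * δ) ^ 2 := by
          have : ‖yh - xr‖ ≤ 6 * δ := by rw [hnorm]; exact hdist
          nlinarith [norm_nonneg (yh - xr)]
        have h1 : F xr = F yh - (F yh - F xr - fderiv ℝ F xr (yh - xr))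
            - fderiv ℝ F xr (yh - xr) := by ring
        have hstep : |F xr| ≤ |F yh| + |F yh - F xr - fderiv ℝ F xr (yh - xr)|
            + |fderiv ℝ F xr (yh - xr)| := by
          calc |F xr| = |F yh - (F yh - F xr - fderiv ℝ F xr (yh - xr))
              - fderiv ℝ F xr (yh - xr)| := by rw [← h1]
            _ ≤ |F yh - (F yh - F xr - fderiv ℝ F xr (yh - xr))|
              + |fderiv ℝ F xr (yh - xr)| := abs_sub _ _
            _ ≤ (|F yh| + |F yh - F xr - fderiv ℝ F xr (yh - xr)|)
              + |fderiv ℝ F xr (yh - xr)| := by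
                have := abs_sub (F yh) (F yh - F xr - fderiv ℝ F xr (yh - xr))
                linarith
        have ha0 : |F yh| = 0 := by rw [hFyh, abs_zero]
        have h2 : |F yh - F xr - fderiv ℝ F xr (yh - xr)| ≤ 4 * (6 * δ) ^ 2 := by
          calc |F yh - F xr - fderiv ℝ F xr (yh - xr)| ≤ 4 * ‖yh - xr‖ ^ 2 := htay
            _ ≤ 4 * (6 * δ) ^ 2 := by linarith
        have h3 : |fderiv ℝ F xr (yh - xr)| ≤ (2 * Cnice * δ + 12 * δ) * (12 * δ) := by
          calc |fderiv ℝ F xr (yh - xr)| ≤ (2 * Cnice * δ + 12 * δ) * (2 * (6 * δ)) := hlin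
            _ = (2 * Cnice * δ + 12 * δ) * (12 * δ) := by ring
        linarith
      have hPxr : P xr = F xr := by rw [← hjet, jet_eval]
      rw [hPxr]
      calc |F xr| ≤ (2 * Cnice * δ + 12 * δ) * (12 * δ) + 4 * (6 * δ) ^ 2 := hFxr
        _ = (24 * Cnice + 288) * δ ^ 2 := by ring
        _ ≤ (300 * Cnice + 300) * δ ^ 2 := by nlinarith [sq_nonneg δ, hδpos]
    · intro i
      calc |pd i P xr| ≤ 2 * Cnice * δ + 12 * δ := hgradP i
        _ ≤ (300 * Cnice + 300) * δ := by nlinarith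
end
end
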